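/- arXiv:1902.03723 — 4 statements merged into one kernel-verified Lean document; each statement's English description precedes it below -/
import Mathlib

section
/- Let Ω ⊆ ℝⁿ be an open set, and let a₁,…,a_N : ℝⁿ → ℝၿ be smooth maps each with vanishing Euclidean divergence (∑ⱼ ∂(a_k)ⱼ/∂xⱼ = 0 for each k). For a differentiable function u define X_k u(x) = a_k(x)·∇u(x) and ∇_X u = (X₁u,…,X_N u). Then for every p > 1, every smooth map g = (g₁,…,g_N) : Ω → ℝᴺ, and every f ∈ C₀^∞(Ω), one has ∫_Ω |∇_X f(x)|^p dx ≥ ∫_Ω ( ∑_{k=1}^N X_k g_k(x) − (p−1) |g(x)|^{p/(p−1)} ) |f(x)|^p dx, where |g| is the Euclidean norm of g in ℝᴺ. -/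
set_option maxHeartbeats 1000000

open MeasureTheory Real

section HardyHelpers

open Filter Set

noncomputable def psiH (p t : ℝ) : ℝ := p * |t| ^ (p - 1) * Real.sign t

lemma psiH_zero (p : ℝ) : psiH p 0 = 0 := by simp [psiH]

lemma abs_psiH_le (p t : ℝ) : |psiH p t| ≤ |p| * |t| ^ (p - 1) := by
  rw [psiH, abs_mul, abs_mul]
  have h1 : |Real.sign t| ≤ 1 := by
    rcases lt_trichotomy t 0 with h | h | h <;>
      simp [Real.sign_of_neg, Real.sign_of_pos, h]
  have h2 : |(|t| ^ (p - 1))| = |t| ^ (p - 1) := abs_of_nonneg (Real.rpow_nonneg (abs_nonneg t) _)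
  rw [h2]
  calc |p| * |t| ^ (p - 1) * |Real.sign t| ≤ |p| * |t| ^ (p - 1) * 1 := by
        apply mul_le_mul_of_nonneg_left h1 (by positivity)
    _ = |p| * |t| ^ (p - 1) := mul_one _

lemma contAbsRpow {q : ℝ} (hq : 0 ≤ q) : Continuous fun s : ℝ => |s| ^ q :=
  continuous_abs.rpow_const (fun _ => Or.inr hq)

lemma psiH_continuous {p : ℝ} (hp : 1 < p) : Continuous (psiH p) := by
  rw [continuous_iff_continuousAt]
  intro t
  rcases lt_trichotomy t 0 with h | h | h
  · have : ∀ᶠ s in nhds t, psiH p s = p * |s| ^ (p - 1) * (-1) := by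
      filter_upwards [Iio_mem_nhds h] with s hs
      simp [psiH, Real.sign_of_neg hs]
    refine ContinuousAt.congr ?_ (this.mono fun s hs => hs.symm)
    exact ((continuous_const.mul (contAbsRpow (by linarith))).mul continuous_const).continuousAt
  · subst h
    have hb : Tendsto (fun s : ℝ => |p| * |s| ^ (p - 1)) (nhds 0) (nhds 0) := by
      have hc : Continuous fun s : ℝ => |p| * |s| ^ (p - 1) :=
        continuous_const.mul (contAbsRpow (by linarith))
      simpa [ContinuousAt, abs_zero, Real.zero_rpow (show p - 1 ≠ 0 by linarith)] using
        hc.continuousAt (x := 0)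
    have : Tendsto (psiH p) (nhds 0) (nhds 0) :=
      squeeze_zero_norm (fun s => by simpa [Real.norm_eq_abs] using abs_psiH_le p s) hb
    simpa [ContinuousAt, psiH_zero] using this
  · have : ∀ᶠ s in nhds t, psiH p s = p * |s| ^ (p - 1) * 1 := by
      filter_upwards [Ioi_mem_nhds h] with s hs
      simp [psiH, Real.sign_of_pos hs]
    refine ContinuousAt.congr ?_ (this.mono fun s hs => hs.symm)
    exact ((continuous_const.mul (contAbsRpow (by linarith))).mul continuous_const).continuousAt

lemma psiH_hasDerivAt {p : ℝ} (hp : 1 < p) (t : ℝ) :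
    HasDerivAt (fun s : ℝ => |s| ^ p) (psiH p t) t := by
  rcases lt_trichotomy t 0 with h | h | h
  · have hne : -t ≠ 0 := by simp [h.ne]
    have h1 : HasDerivAt (fun s : ℝ => s ^ p) (p * (-t) ^ (p - 1)) (-t) :=
      Real.hasDerivAt_rpow_const (Or.inl hne)
    have h2 : HasDerivAt (fun s : ℝ => -s) (-1) t := (hasDerivAt_id t).neg
    have h3 : HasDerivAt (fun s : ℝ => (-s) ^ p) (p * (-t) ^ (p - 1) * (-1)) t := h1.comp t h2
    have he : (fun s : ℝ => |s| ^ p) =ᶠ[nhds t] fun s => (-s) ^ p := by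
      filter_upwards [Iio_mem_nhds h] with s hs
      rw [abs_of_neg hs]
    rw [show psiH p t = p * (-t) ^ (p - 1) * (-1) from by
      rw [psiH, Real.sign_of_neg h, abs_of_neg h]]
    exact h3.congr_of_eventuallyEq he
  · subst h
    rw [hasDerivAt_iff_tendsto_slope]
    have hb : Tendsto (fun s : ℝ => |s| ^ (p - 1)) (nhdsWithin 0 {(0:ℝ)}ᶜ) (nhds 0) := by
      apply tendsto_nhdsWithin_of_tendsto_nhds
      simpa [ContinuousAt, abs_zero, Real.zero_rpow (show p - 1 ≠ 0 by linarith)] using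
        (contAbsRpow (by linarith : (0:ℝ) ≤ p - 1)).continuousAt (x := 0)
    rw [psiH_zero]
    apply squeeze_zero_norm _ hb
    intro s
    rcases eq_or_ne s 0 with rfl | hs
    · simp only [slope_def_field, sub_self, div_zero, norm_zero]
      positivity
    · have h0 : (0:ℝ) < |s| := abs_pos.2 hs
      rw [slope_def_field]
      have : |(0:ℝ)| ^ p = 0 := by simp [Real.zero_rpow (by positivity : p ≠ 0)]
      rw [this, sub_zero, sub_zero, Real.norm_eq_abs, abs_div,
        abs_of_nonneg (Real.rpow_nonneg (abs_nonneg s) p), Real.rpow_sub h0, Real.rpow_one]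
  · have h1 : HasDerivAt (fun s : ℝ => s ^ p) (p * t ^ (p - 1)) t :=
      Real.hasDerivAt_rpow_const (Or.inl h.ne')
    have he : (fun s : ℝ => |s| ^ p) =ᶠ[nhds t] fun s => s ^ p := by
      filter_upwards [Ioi_mem_nhds h] with s hs
      rw [abs_of_pos hs]
    rw [show psiH p t = p * t ^ (p - 1) from by
      rw [psiH, Real.sign_of_pos h, abs_of_pos h]; ring_nf]
    exact h1.congr_of_eventuallyEq he

lemma pointwise_young {p : ℝ} (hp : 1 < p) {N : ℕ} (w v : Fin N → ℝ) (t : ℝ) :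
    -(psiH p t * (∑ k, w k * v k)) - (p - 1) * (∑ k, (w k)^2) ^ (p / (2*(p-1))) * |t| ^ p
      ≤ (∑ k, (v k)^2) ^ (p / 2) := by
  have hp0 : (0:ℝ) < p := by linarith
  have hp1 : p - 1 ≠ 0 := by linarith
  set q : ℝ := p / (p - 1) with hqdef
  have hpq : p.HolderConjugate q := Real.HolderConjugate.conjExponent hp
  set Sw : ℝ := ∑ k, (w k)^2 with hSw
  set Sv : ℝ := ∑ k, (v k)^2 with hSv
  have hSw0 : 0 ≤ Sw := Finset.sum_nonneg fun k _ => sq_nonneg _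
  have hSv0 : 0 ≤ Sv := Finset.sum_nonneg fun k _ => sq_nonneg _
  set s : ℝ := |t| with hs
  have hs0 : 0 ≤ s := abs_nonneg t
  -- Cauchy-Schwarz
  have hCS : |∑ k, w k * v k| ≤ Sw ^ ((1:ℝ)/2) * Sv ^ ((1:ℝ)/2) := by
    have h1 : (∑ k, w k * v k) ^ 2 ≤ Sw * Sv := Finset.sum_mul_sq_le_sq_mul_sq _ _ _
    have h2 : |∑ k, w k * v k| ≤ Real.sqrt (Sw * Sv) := Real.abs_le_sqrt h1
    rwa [Real.sqrt_mul hSw0, Real.sqrt_eq_rpow, Real.sqrt_eq_rpow] at h2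
  -- Young
  have hyoung : p * (Sv ^ ((1:ℝ)/2) * (Sw ^ ((1:ℝ)/2) * s ^ (p-1)))
      ≤ Sv ^ (p/2) + (p - 1) * (Sw ^ (q/2) * s ^ p) := by
    have ha : (0:ℝ) ≤ Sv ^ ((1:ℝ)/2) := Real.rpow_nonneg hSv0 _
    have hb : (0:ℝ) ≤ Sw ^ ((1:ℝ)/2) * s ^ (p-1) := by positivity
    have hY := Real.young_inequality_of_nonneg ha hb hpq
    have e1 : (Sv ^ ((1:ℝ)/2)) ^ p = Sv ^ (p/2) := by
      rw [← Real.rpow_mul hSv0]; congr 1; ring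
    have e2 : (Sw ^ ((1:ℝ)/2) * s ^ (p-1)) ^ q = Sw ^ (q/2) * s ^ p := by
      rw [Real.mul_rpow (Real.rpow_nonneg hSw0 _) (Real.rpow_nonneg hs0 _),
        ← Real.rpow_mul hSw0, ← Real.rpow_mul hs0]
      congr 2
      · ring
      · rw [hqdef]
        field_simp
    rw [e1, e2] at hY
    have hq0 : (0:ℝ) < q := hpq.symm.pos
    calc p * (Sv ^ ((1:ℝ)/2) * (Sw ^ ((1:ℝ)/2) * s ^ (p-1)))
        ≤ p * (Sv ^ (p/2) / p + Sw ^ (q/2) * s ^ p / q) := by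
          apply mul_le_mul_of_nonneg_left hY hp0.le
      _ = Sv ^ (p/2) + (p/q) * (Sw ^ (q/2) * s ^ p) := by
          field_simp
      _ = Sv ^ (p/2) + (p - 1) * (Sw ^ (q/2) * s ^ p) := by
          congr 2
          rw [hqdef]
          field_simp
  have hq2 : p / (2*(p-1)) = q / 2 := by rw [hqdef, div_div]; ring_nf
  have habs : -(psiH p t * (∑ k, w k * v k)) ≤ p * s ^ (p-1) * (Sw ^ ((1:ℝ)/2) * Sv ^ ((1:ℝ)/2)) := by
    calc -(psiH p t * (∑ k, w k * v k)) ≤ |psiH p t * (∑ k, w k * v k)| := neg_le_abs _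
      _ = |psiH p t| * |∑ k, w k * v k| := abs_mul _ _
      _ ≤ (|p| * s ^ (p-1)) * (Sw ^ ((1:ℝ)/2) * Sv ^ ((1:ℝ)/2)) := by
          apply mul_le_mul (abs_psiH_le p t) hCS (abs_nonneg _) (by positivity)
      _ = p * s ^ (p-1) * (Sw ^ ((1:ℝ)/2) * Sv ^ ((1:ℝ)/2)) := by
          rw [abs_of_pos hp0]
  have hfin : p * s ^ (p-1) * (Sw ^ ((1:ℝ)/2) * Sv ^ ((1:ℝ)/2))
      = p * (Sv ^ ((1:ℝ)/2) * (Sw ^ ((1:ℝ)/2) * s ^ (p-1))) := by ring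
  rw [hq2]
  have hsp : |t| ^ p = s ^ p := rfl
  rw [hsp]
  nlinarith [habs, hyoung, hfin]

lemma divergence_integral_eq_zero {n : ℕ} (W : (Fin n → ℝ) → (Fin n → ℝ))
    (W' : (Fin n → ℝ) → ((Fin n → ℝ) →L[ℝ] (Fin n → ℝ)))
    (hW : ∀ x, HasFDerivAt W (W' x) x) (hWc : HasCompactSupport W)
    (hi : Integrable (fun x => ∑ j, W' x (Pi.single j 1) j)) :
    ∫ x, ∑ j, W' x (Pi.single j 1) j = 0 := by
  cases n with
  | zero => simp
  | succ m =>
    obtain ⟨R, hR0, hRsub⟩ : ∃ R, 0 < R ∧ tsupport W ⊆ Metric.closedBall 0 R := by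
      obtain ⟨R, hRsub⟩ := hWc.isBounded.subset_closedBall 0
      exact ⟨max R 1, lt_of_lt_of_le one_pos (le_max_right _ _),
        hRsub.trans (Metric.closedBall_subset_closedBall (le_max_left _ _))⟩
    set b : Fin (m+1) → ℝ := fun _ => R + 1 with hb
    set a : Fin (m+1) → ℝ := fun _ => -(R + 1) with ha
    have hle : a ≤ b := fun i => by simp only [ha, hb]; linarith
    have hWzero : ∀ y, y ∉ Metric.closedBall (0 : Fin (m+1) → ℝ) R → W y = 0 := by
      intro y hy
      by_contra h
      exact hy (hRsub (subset_tsupport W (by simpa using h)))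
    have hdivzero : ∀ x, x ∉ tsupport W → ∑ j, W' x (Pi.single j 1) j = 0 := by
      intro x hx
      have h1 : W' x = fderiv ℝ W x := ((hW x).fderiv).symm
      rw [h1, fderiv_of_notMem_tsupport ℝ hx]
      simp
    have hsub : tsupport W ⊆ Icc a b := by
      refine hRsub.trans ?_
      intro x hx
      simp only [Metric.mem_closedBall, dist_zero_right] at hx
      rw [Set.mem_Icc]
      constructor <;> intro i <;>
        have h2 := abs_le.1 (((norm_le_pi_norm x i)).trans hx)
      · show -(R+1) ≤ x i; linarith [h2.1]
      · show x i ≤ R+1; linarith [h2.2]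
    have hcont : Continuous W := by
      have : Differentiable ℝ W := fun x => (hW x).differentiableAt
      exact this.continuous
    have key := MeasureTheory.integral_divergence_of_hasFDerivAt_off_countable a b hle W W'
      ∅ Set.countable_empty hcont.continuousOn (fun x _ => hW x) hi.integrableOn
    have hfaces : ∀ i : Fin (m+1),
        ((∫ x in Icc (a ∘ Fin.succAbove i) (b ∘ Fin.succAbove i),
            W (Fin.insertNth i (b i) x) i) -
          ∫ x in Icc (a ∘ Fin.succAbove i) (b ∘ Fin.succAbove i),
            W (Fin.insertNth i (a i) x) i) = 0 := by
      intro i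
      have hgen : ∀ (c : ℝ), |c| = R + 1 → ∀ x : Fin m → ℝ, W (Fin.insertNth i c x) = 0 := by
        intro c hcval x
        have hy : (Fin.insertNth i c x : Fin (m+1) → ℝ) i = c :=
          Fin.insertNth_apply_same (α := fun _ => ℝ) i c x
        apply hWzero
        simp only [Metric.mem_closedBall, dist_zero_right]
        intro hc
        have h2 : |(Fin.insertNth i c x : Fin (m+1) → ℝ) i| ≤ R :=
          (norm_le_pi_norm (Fin.insertNth i c x : Fin (m+1) → ℝ) i).trans hc
        rw [hy, hcval] at h2
        linarith
      have hfront := hgen (b i) (by simp only [hb]; rw [abs_of_pos (by linarith)])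
      have hback := hgen (a i) (by simp only [ha]; rw [abs_of_nonpos (by linarith)]; ring)
      simp [hfront, hback]
    rw [Finset.sum_congr rfl (fun i _ => hfaces i), Finset.sum_const, smul_zero] at key
    rw [← key]
    symm
    apply MeasureTheory.setIntegral_eq_integral_of_forall_compl_eq_zero
    intro x hx
    exact hdivzero x (fun hmem => hx (hsub hmem))

lemma cont_integrable_of_supp {n : ℕ} {Ω : Set (Fin n → ℝ)} (hΩ : IsOpen Ω)
    {K : Set (Fin n → ℝ)} (hKcp : IsCompact K) (hKcl : IsClosed K) (hKΩ : K ⊆ Ω)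
    {h : (Fin n → ℝ) → ℝ} (hc : ContinuousOn h Ω) (hsupp : Function.support h ⊆ K) :
    Continuous h ∧ Integrable h := by
  have hcont : Continuous h := by
    rw [continuous_iff_continuousAt]; intro x
    by_cases hx : x ∈ Ω
    · exact hc.continuousAt (hΩ.mem_nhds hx)
    · have hxK : x ∉ K := fun hk => hx (hKΩ hk)
      have hev : h =ᶠ[nhds x] fun _ => 0 := by
        filter_upwards [hKcl.isOpen_compl.mem_nhds hxK] with y hy
        exact Function.notMem_support.1 fun hs => hy (hsupp hs)
      have h0 : h x = 0 := hev.self_of_nhds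
      exact (h0 ▸ hev).continuousAt
  have hcs : HasCompactSupport h :=
    HasCompactSupport.intro' hKcp hKcl fun x hx => Function.notMem_support.1 fun hs => hx (hsupp hs)
  exact ⟨hcont, hcont.integrable_of_hasCompactSupport hcs⟩

end HardyHelpers

/-- the divergence-type inequality
`∫_Ω |∇_X f|^p ≥ ∫_Ω ( ∑ₖ Xₖ gₖ − (p−1)|g|^{p/(p−1)} ) |f|^p`
for vector fields `Xₖ u = aₖ · ∇u` with divergence-free smooth coefficients `aₖ`. -/
theorem stmt_0 {n N : ℕ} (Ω : Set (Fin n → ℝ)) (hΩ : IsOpen Ω)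
    (a : Fin N → (Fin n → ℝ) → (Fin n → ℝ))
    (ha : ∀ k, ContDiff ℝ (⊤ : ℕ∞) (a k))
    (hdiv : ∀ k x, ∑ j, fderiv ℝ (fun y => a k y j) x (Pi.single j 1) = 0)
    (p : ℝ) (hp : 1 < p)
    (g : Fin N → (Fin n → ℝ) → ℝ)
    (hg : ∀ k, ContDiffOn ℝ (⊤ : ℕ∞) (g k) Ω)
    (f : (Fin n → ℝ) → ℝ)
    (hf : ContDiff ℝ (⊤ : ℕ∞) f) (hfc : HasCompactSupport f)
    (hfs : tsupport f ⊆ Ω) :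
    ∫ x in Ω, (∑ k, (fderiv ℝ f x (a k x)) ^ 2) ^ (p / 2) ≥
      ∫ x in Ω,
        ((∑ k, fderiv ℝ (g k) x (a k x))
          - (p - 1) * (∑ k, (g k x) ^ 2) ^ (p / (2 * (p - 1)))) * |f x| ^ p := by
  classical
  have htop : (1 : WithTop ℕ∞) ≤ ((⊤:ℕ∞) : WithTop ℕ∞) := by exact_mod_cast le_top
  have hp0 : (0:ℝ) < p := lt_trans one_pos hp
  set K := tsupport f with hKdef
  have hKcp : IsCompact K := hfc
  have hKcl : IsClosed K := isClosed_tsupport f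
  have hKΩ : K ⊆ Ω := hfs
  have hfzero : ∀ x, x ∉ K → f x = 0 := fun x hx => image_eq_zero_of_notMem_tsupport hx
  have hfd : Differentiable ℝ f := hf.differentiable (by simp)
  set φ : (Fin n → ℝ) → ℝ := fun x => |f x| ^ p with hφdef
  have hφc : Continuous φ := (hf.continuous.abs).rpow_const (fun x => Or.inr hp0.le)
  have hφ0 : ∀ x, f x = 0 → φ x = 0 := fun x hx => by
    simp only [hφdef, hx, abs_zero]; exact Real.zero_rpow (ne_of_gt hp0)
  have hφd : ∀ x, HasFDerivAt φ (psiH p (f x) • fderiv ℝ f x) x := fun x =>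
    (psiH_hasDerivAt hp (f x)).comp_hasFDerivAt x (hfd x).hasFDerivAt
  have hDf : Continuous (fderiv ℝ f) := hf.continuous_fderiv (by simp)
  have hXf : ∀ k : Fin N, Continuous (fun x => fderiv ℝ f x (a k x)) := fun k =>
    hDf.clm_apply (ha k).continuous
  set A : Fin N → (Fin n → ℝ) → ℝ := fun k x => fderiv ℝ (g k) x (a k x) * φ x with hAdef
  set B : Fin N → (Fin n → ℝ) → ℝ :=
    fun k x => g k x * (psiH p (f x) * fderiv ℝ f x (a k x)) with hBdef
  have hAci : ∀ k, Continuous (A k) ∧ Integrable (A k) := by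
    intro k
    apply cont_integrable_of_supp hΩ hKcp hKcl hKΩ
    · exact (((hg k).continuousOn_fderiv_of_isOpen hΩ htop).clm_apply
        (ha k).continuous.continuousOn).mul hφc.continuousOn
    · intro x hx
      by_contra hxK
      exact hx (by simp only [hAdef, hφ0 x (hfzero x hxK), mul_zero])
  have hBci : ∀ k, Continuous (B k) ∧ Integrable (B k) := by
    intro k
    apply cont_integrable_of_supp hΩ hKcp hKcl hKΩ
    · exact ((hg k).continuousOn).mul
        ((((psiH_continuous hp).comp hf.continuous).mul (hXf k)).continuousOn)
    · intro x hx
      by_contra hxK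
      exact hx (by simp only [hBdef, hfzero x hxK, psiH_zero, zero_mul, mul_zero])
  -- Key integration by parts identity
  have key : ∀ k : Fin N, ∫ x in Ω, A k x = - ∫ x in Ω, B k x := by
    intro k
    set G : (Fin n → ℝ) → ℝ := fun x => g k x * φ x with hGdef
    set W : (Fin n → ℝ) → (Fin n → ℝ) := fun x => G x • a k x with hWdef
    set W' : (Fin n → ℝ) → ((Fin n → ℝ) →L[ℝ] (Fin n → ℝ)) := fun x =>
      if x ∈ Ω then
        (G x • fderiv ℝ (a k) x +
          (g k x • (psiH p (f x) • fderiv ℝ f x) + φ x • fderiv ℝ (g k) x).smulRight (a k x))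
      else 0 with hW'def
    have hak : ∀ x, HasFDerivAt (a k) (fderiv ℝ (a k) x) x := fun x =>
      ((ha k).differentiable (by simp) x).hasFDerivAt
    have hW' : ∀ x, HasFDerivAt W (W' x) x := by
      intro x
      by_cases hx : x ∈ Ω
      · have hgk : HasFDerivAt (g k) (fderiv ℝ (g k) x) x :=
          (((hg k).differentiableOn (by simp)).differentiableAt (hΩ.mem_nhds hx)).hasFDerivAt
        have hG : HasFDerivAt G
            (g k x • (psiH p (f x) • fderiv ℝ f x) + φ x • fderiv ℝ (g k) x) x :=
          hgk.mul (hφd x)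
        have := hG.smul (hak x)
        simp only [hW'def, if_pos hx]; exact this
      · have hx' : x ∉ K := fun hk => hx (hKΩ hk)
        have hev : W =ᶠ[nhds x] fun _ => 0 := by
          filter_upwards [hKcl.isOpen_compl.mem_nhds hx'] with y hy
          have : f y = 0 := hfzero y hy
          simp only [hWdef, hGdef, hφ0 y this, mul_zero, zero_smul]
        have h0 : HasFDerivAt W (0 : (Fin n → ℝ) →L[ℝ] (Fin n → ℝ)) x :=
          (hasFDerivAt_const (0 : Fin n → ℝ) x).congr_of_eventuallyEq hev
        simpa only [hW'def, if_neg hx] using h0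
    have hWsupp : Function.support W ⊆ K := by
      intro x hx
      by_contra hxK
      apply hx
      simp only [hWdef, hGdef, hφ0 x (hfzero x hxK), mul_zero, zero_smul]
    have hWcs : HasCompactSupport W :=
      HasCompactSupport.intro' hKcp hKcl fun x hx => Function.notMem_support.1 fun hs => hx (hWsupp hs)
    -- the divergence equals (A k + B k) on Ω and 0 outside
    have hDeq : ∀ x, (∑ j, W' x (Pi.single j 1) j) = if x ∈ Ω then A k x + B k x else 0 := by
      intro x
      by_cases hx : x ∈ Ω
      · rw [if_pos hx]
        have hsingle : ∀ j : Fin n, W' x (Pi.single j 1) j =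
            G x * (fderiv ℝ (a k) x (Pi.single j 1) j) +
            ((g k x • (psiH p (f x) • fderiv ℝ f x) + φ x • fderiv ℝ (g k) x) (Pi.single j 1))
              * a k x j := by
          intro j
          simp only [hW'def, if_pos hx, ContinuousLinearMap.add_apply,
            ContinuousLinearMap.smulRight_apply, ContinuousLinearMap.coe_smul', Pi.smul_apply,
            Pi.add_apply, smul_eq_mul]
        rw [Finset.sum_congr rfl fun j _ => hsingle j, Finset.sum_add_distrib]
        have hdiva : (∑ j, G x * (fderiv ℝ (a k) x (Pi.single j 1) j)) = 0 := by
          rw [← Finset.mul_sum]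
          have hproj : ∀ j : Fin n, fderiv ℝ (a k) x (Pi.single j 1) j =
              fderiv ℝ (fun y => a k y j) x (Pi.single j 1) := by
            intro j
            set P : (Fin n → ℝ) →L[ℝ] ℝ := ContinuousLinearMap.proj j with hPdef
            have h1 := P.hasFDerivAt.comp x (hak x)
            have h2 : HasFDerivAt (fun y => a k y j) (P.comp (fderiv ℝ (a k) x)) x := h1
            rw [h2.fderiv]
            rfl
          rw [Finset.sum_congr rfl fun j _ => hproj j, hdiv k x, mul_zero]
        rw [hdiva, zero_add]
        -- second sum
        set L : (Fin n → ℝ) →L[ℝ] ℝ :=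
          g k x • (psiH p (f x) • fderiv ℝ f x) + φ x • fderiv ℝ (g k) x with hLdef
        have hv : (∑ j, a k x j • (Pi.single j 1 : Fin n → ℝ)) = a k x := by
          ext i
          simp [Pi.single_apply]
        have hsum : (∑ j, L (Pi.single j 1) * a k x j) = L (a k x) := by
          calc (∑ j, L (Pi.single j 1) * a k x j)
              = ∑ j, L (a k x j • (Pi.single j 1 : Fin n → ℝ)) := by
                apply Finset.sum_congr rfl
                intro j _
                rw [ContinuousLinearMap.map_smul, smul_eq_mul, mul_comm]
            _ = L (∑ j, a k x j • (Pi.single j 1 : Fin n → ℝ)) := (map_sum L _ _).symm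
            _ = L (a k x) := by rw [hv]
        rw [hsum]
        have : L (a k x) = B k x + A k x := by
          simp only [hLdef, ContinuousLinearMap.add_apply, ContinuousLinearMap.coe_smul',
            Pi.smul_apply, smul_eq_mul, hAdef, hBdef]
          ring
        rw [this]
        ring
      · rw [if_neg hx]
        simp only [hW'def, if_neg hx]
        simp
    have hQint : Integrable (fun x => if x ∈ Ω then A k x + B k x else 0) := by
      have : (fun x => if x ∈ Ω then A k x + B k x else 0)
          = Ω.indicator (fun x => A k x + B k x) := by
        funext x
        rw [Set.indicator_apply]
      rw [this]
      exact ((hAci k).2.add (hBci k).2).indicator hΩ.measurableSet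
    have hdint : Integrable (fun x => ∑ j, W' x (Pi.single j 1) j) := by
      have : (fun x => ∑ j, W' x (Pi.single j 1) j)
          = fun x => if x ∈ Ω then A k x + B k x else 0 := funext hDeq
      rw [this]; exact hQint
    have hzero := divergence_integral_eq_zero W W' hW' hWcs hdint
    rw [funext hDeq] at hzero
    have : (fun x => if x ∈ Ω then A k x + B k x else 0)
        = Ω.indicator (fun x => A k x + B k x) := by
      funext x; rw [Set.indicator_apply]
    rw [this, integral_indicator hΩ.measurableSet] at hzero
    rw [integral_add ((hAci k).2.integrableOn) ((hBci k).2.integrableOn)] at hzero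
    linarith
  -- Now assemble
  set S : (Fin n → ℝ) → ℝ := fun x => (∑ k, (g k x) ^ 2) ^ (p / (2 * (p - 1))) with hSdef
  have hSφci : Continuous (fun x => S x * φ x) ∧ Integrable (fun x => S x * φ x) := by
    apply cont_integrable_of_supp hΩ hKcp hKcl hKΩ
    · have hsum : ContinuousOn (fun x => ∑ k, (g k x) ^ 2) Ω := by
        apply continuousOn_finset_sum
        intro k _
        exact ((hg k).continuousOn).pow 2
      exact (hsum.rpow_const fun x _ => Or.inr (div_nonneg hp0.le (by linarith))).mul
        hφc.continuousOn
    · intro x hx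
      by_contra hxK
      exact hx (by simp only [hφ0 x (hfzero x hxK), mul_zero])
  have hLci : Continuous (fun x => (∑ k, (fderiv ℝ f x (a k x)) ^ 2) ^ (p / 2))
      ∧ Integrable (fun x => (∑ k, (fderiv ℝ f x (a k x)) ^ 2) ^ (p / 2)) := by
    apply cont_integrable_of_supp hΩ hKcp hKcl hKΩ
    · apply ContinuousOn.rpow_const
      · exact (continuousOn_finset_sum _ fun k _ => ((hXf k).continuousOn).pow 2)
      · intro x _; exact Or.inr (by positivity)
    · intro x hx
      by_contra hxK
      apply hx
      have h0 : fderiv ℝ f x = 0 := fderiv_of_notMem_tsupport ℝ hxK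
      simp only [h0, ContinuousLinearMap.zero_apply]
      rw [show (∑ _k : Fin N, (0:ℝ)^2) = 0 by simp, Real.zero_rpow (by positivity)]
  -- rewrite the RHS integral
  have hRHS : (∫ x in Ω, ((∑ k, fderiv ℝ (g k) x (a k x))
        - (p - 1) * (∑ k, (g k x) ^ 2) ^ (p / (2 * (p - 1)))) * |f x| ^ p)
      = (∑ k, ∫ x in Ω, A k x) - (p - 1) * ∫ x in Ω, S x * φ x := by
    have heq : ∀ x, ((∑ k, fderiv ℝ (g k) x (a k x))
        - (p - 1) * (∑ k, (g k x) ^ 2) ^ (p / (2 * (p - 1)))) * |f x| ^ p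
        = (∑ k, A k x) - (p - 1) * (S x * φ x) := by
      intro x
      simp only [hAdef, hSdef, hφdef]
      rw [sub_mul, Finset.sum_mul]
      ring
    calc (∫ x in Ω, ((∑ k, fderiv ℝ (g k) x (a k x))
        - (p - 1) * (∑ k, (g k x) ^ 2) ^ (p / (2 * (p - 1)))) * |f x| ^ p)
        = ∫ x in Ω, ((∑ k, A k x) - (p - 1) * (S x * φ x)) := by
          apply integral_congr_ae
          filter_upwards with x using heq x
      _ = (∫ x in Ω, ∑ k, A k x) - ∫ x in Ω, (p - 1) * (S x * φ x) := by
          apply integral_sub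
          · exact integrable_finset_sum _ fun k _ => (hAci k).2.integrableOn
          · exact (hSφci.2.integrableOn).const_mul _
      _ = (∑ k, ∫ x in Ω, A k x) - (p - 1) * ∫ x in Ω, S x * φ x := by
          rw [integral_finset_sum _ fun k _ => (hAci k).2.integrableOn, integral_const_mul]
  -- define T and rewrite further
  have hsumkey : (∑ k, ∫ x in Ω, A k x) = - ∑ k, ∫ x in Ω, B k x := by
    rw [Finset.sum_congr rfl fun k _ => key k]
    exact Finset.sum_neg_distrib _
  have hTeq : (∫ x in Ω, ((∑ k, fderiv ℝ (g k) x (a k x))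
        - (p - 1) * (∑ k, (g k x) ^ 2) ^ (p / (2 * (p - 1)))) * |f x| ^ p)
      = ∫ x in Ω, (-(∑ k, B k x) - (p - 1) * (S x * φ x)) := by
    rw [hRHS, hsumkey]
    have h1 : IntegrableOn (fun x => -(∑ k, B k x)) Ω volume := by
      exact (integrable_finset_sum _ fun k _ => (hBci k).2.integrableOn).neg
    have h2 : IntegrableOn (fun x => (p - 1) * (S x * φ x)) Ω volume :=
      (hSφci.2.integrableOn).const_mul _
    rw [integral_sub h1 h2, integral_neg,
      integral_finset_sum _ fun k _ => (hBci k).2.integrableOn, integral_const_mul]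
  rw [ge_iff_le, hTeq]
  apply setIntegral_mono_on
  · exact ((integrable_finset_sum _ fun k _ => (hBci k).2.integrableOn).neg).sub
      ((hSφci.2.integrableOn).const_mul _)
  · exact hLci.2.integrableOn
  · exact hΩ.measurableSet
  · intro x _
    have hY := pointwise_young hp (fun k => g k x) (fun k => fderiv ℝ f x (a k x)) (f x)
    have hBsum : (∑ k, B k x) = psiH p (f x) * ∑ k, g k x * fderiv ℝ f x (a k x) := by
      rw [Finset.mul_sum]
      apply Finset.sum_congr rfl
      intro k _
      simp only [hBdef]
      ring
    rw [hBsum]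
    simp only [hSdef, hφdef]
    calc -(psiH p (f x) * ∑ k, g k x * fderiv ℝ f x (a k x))
          - (p - 1) * ((∑ k, (g k x) ^ 2) ^ (p / (2 * (p - 1))) * |f x| ^ p)
        = -(psiH p (f x) * ∑ k, g k x * fderiv ℝ f x (a k x))
          - (p - 1) * (∑ k, (g k x) ^ 2) ^ (p / (2 * (p - 1))) * |f x| ^ p := by ring
      _ ≤ (∑ k, (fderiv ℝ f x (a k x)) ^ 2) ^ (p / 2) := hY
end

section
/- On ℝ³ with the Heisenberg horizontal gradient ∇_H f = (X₁f, X₂f), where X₁f(x) = ∂f/∂x₁ + 2x₂ ∂f/∂x₃ and X₂f(x) = ∂f/∂x₂ − 2x₁ ∂f/∂x₃, let n = (n₁,n₂,n₃) ∈ ℝ³ be a unit vector and let Ω ⊆ {x ∈ ℝ³ : x₁n₁ + x₂n₂ + 2x₃n₃ > 0} be an open set. Then for every p > 1 and every f ∈ C₀^∞(Ω): ∫_Ω |∇_H f(x)|^p dx ≥ ((p−1)/p)^p ∫_Ω ( ((n₁ + 4x₂n₃)² + (n₂ − 4x₁n₃)²)^{p/2} / |x₁n₁ + x₂n₂ + 2x₃n₃|^p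 ) |f(x)|^p dx. -/
open MeasureTheory Real
open Set Filter Topology

/-- The Heisenberg vector field `X₁ f = ∂f/∂x₁ + 2x₂ ∂f/∂x₃` on `ℝ³`. -/
noncomputable def X1H (f : (Fin 3 → ℝ) → ℝ) (x : Fin 3 → ℝ) : ℝ :=
  fderiv ℝ f x ![1, 0, 2 * x 1]

/-- The Heisenberg vector field `X₂ f = ∂f/∂x₂ − 2x₁ ∂f/∂x₃` on `ℝ³`. -/
noncomputable def X2H (f : (Fin 3 → ℝ) → ℝ) (x : Fin 3 → ℝ) : ℝ :=
  fderiv ℝ f x ![0, 1, -2 * x 0]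

namespace HardyAux

def dZ (n : Fin 3 → ℝ) (x : Fin 3 → ℝ) : ℝ := x 0 * n 0 + x 1 * n 1 + 2 * x 2 * n 2
def aZ (n : Fin 3 → ℝ) (x : Fin 3 → ℝ) : ℝ := n 0 + 4 * x 1 * n 2
def bZ (n : Fin 3 → ℝ) (x : Fin 3 → ℝ) : ℝ := n 1 - 4 * x 0 * n 2
def qZ (n : Fin 3 → ℝ) (x : Fin 3 → ℝ) : ℝ := aZ n x ^ 2 + bZ n x ^ 2

lemma qZ_nonneg (n : Fin 3 → ℝ) (x : Fin 3 → ℝ) : 0 ≤ qZ n x :=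
  add_nonneg (sq_nonneg _) (sq_nonneg _)

lemma X1H_eq (f : (Fin 3 → ℝ) → ℝ) (x : Fin 3 → ℝ) :
    X1H f x = fderiv ℝ f x (Pi.single 0 1) + 2 * x 1 * fderiv ℝ f x (Pi.single 2 1) := by
  have hv : (![1, 0, 2 * x 1] : Fin 3 → ℝ)
      = (Pi.single 0 1 : Fin 3 → ℝ) + (2 * x 1) • (Pi.single 2 1 : Fin 3 → ℝ) := by
    funext i; fin_cases i <;> simp [Pi.single_apply]
  rw [X1H, hv, map_add, ContinuousLinearMap.map_smul, smul_eq_mul]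

lemma X2H_eq (f : (Fin 3 → ℝ) → ℝ) (x : Fin 3 → ℝ) :
    X2H f x = fderiv ℝ f x (Pi.single 1 1) - 2 * x 0 * fderiv ℝ f x (Pi.single 2 1) := by
  have hv : (![0, 1, -2 * x 0] : Fin 3 → ℝ)
      = (Pi.single 1 1 : Fin 3 → ℝ) + (-(2 * x 0)) • (Pi.single 2 1 : Fin 3 → ℝ) := by
    funext i; fin_cases i <;> (first | (simp [Pi.single_apply]; try ring) | rfl)
  rw [X2H, hv, map_add, ContinuousLinearMap.map_smul, smul_eq_mul]
  ring

noncomputable def AeZ (n : Fin 3 → ℝ) (p : ℝ) (f : (Fin 3 → ℝ) → ℝ) (ε : ℝ)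
    (x : Fin 3 → ℝ) : ℝ :=
  |f x| ^ p * ((qZ n x + ε) ^ ((p - 2) / 2) * (qZ n x * dZ n x ^ (-p)))

noncomputable def PeZ (n : Fin 3 → ℝ) (p : ℝ) (f : (Fin 3 → ℝ) → ℝ) (ε : ℝ)
    (x : Fin 3 → ℝ) : ℝ :=
  (qZ n x + ε) ^ ((p - 2) / 2) *
    (dZ n x ^ (-(p - 1)) *
      ((p * |f x| ^ (p - 2) * f x) * (aZ n x * X1H f x + bZ n x * X2H f x)))

lemma integral_divsum_eq_zero
    (F : Fin 3 → (Fin 3 → ℝ) → ℝ)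
    (F' : Fin 3 → (Fin 3 → ℝ) → ((Fin 3 → ℝ) →L[ℝ] ℝ))
    (hF : ∀ i x, HasFDerivAt (F i) (F' i x) x)
    (K : Set (Fin 3 → ℝ)) (hK : IsCompact K)
    (h0 : ∀ i, ∀ x ∉ K, F i x = 0)
    (hi : Integrable (fun x => ∑ i, F' i x (Pi.single i 1))) :
    ∫ x, ∑ i, F' i x (Pi.single i 1) = 0 := by
  -- derivative vanishes off K
  have hF'0 : ∀ i, ∀ x ∉ K, F' i x = 0 := by
    intro i x hx
    have hopen : IsOpen Kᶜ := hK.isClosed.isOpen_compl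
    have hev : (fun y => (0:ℝ)) =ᶠ[nhds x] F i := by
      filter_upwards [hopen.mem_nhds hx] with y hy
      exact (h0 i y hy).symm
    exact (((hasFDerivAt_const (0:ℝ) x).congr_of_eventuallyEq hev.symm).unique (hF i x)).symm
  obtain ⟨R, hR⟩ := hK.isBounded.subset_closedBall 0
  set R' : ℝ := max R 0 + 1 with hR'def
  have hR'pos : 0 < R' := by positivity
  have hKR : K ⊆ Metric.ball 0 R' := by
    refine hR.trans (Metric.closedBall_subset_ball ?_)
    have : R ≤ max R 0 := le_max_left _ _
    linarith
  set a : Fin 3 → ℝ := fun _ => -R' with ha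
  set b : Fin 3 → ℝ := fun _ => R' with hb
  have hle : a ≤ b := fun i => by simp [ha, hb]; linarith
  have hKIcc : K ⊆ Icc a b := by
    intro y hy
    have := hKR hy
    rw [Metric.mem_ball, dist_zero_right] at this
    constructor <;> intro i
    · have := (norm_le_pi_norm y i).trans this.le
      simp only [Real.norm_eq_abs] at this
      have := abs_le.mp this
      simpa [ha] using this.1
    · have h1 := (norm_le_pi_norm y i).trans this.le
      simp only [Real.norm_eq_abs] at h1
      have := abs_le.mp h1
      simpa [hb] using this.2
  have key := MeasureTheory.integral_divergence_of_hasFDerivAt_off_countable'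
    a b hle F F' ∅ Set.countable_empty
    (fun i => (continuous_iff_continuousAt.mpr fun x => (hF i x).continuousAt).continuousOn)
    (fun x _ i => hF i x) hi.integrableOn
  -- boundary terms vanish
  have hfront : ∀ i : Fin 3, ∀ y : Fin 2 → ℝ, F i (Fin.insertNth (α := fun _ => ℝ) i (b i) y) = 0 := by
    intro i y
    apply h0
    intro hmem
    have := hKR hmem
    rw [Metric.mem_ball, dist_zero_right] at this
    have h1 : |((Fin.insertNth (α := fun _ => ℝ) i (b i) y) : Fin 3 → ℝ) i| ≤ ‖(Fin.insertNth (α := fun _ => ℝ) i (b i) y : Fin 3 → ℝ)‖ := by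
      simpa using norm_le_pi_norm (Fin.insertNth (α := fun _ => ℝ) i (b i) y) i
    rw [Fin.insertNth_apply_same] at h1
    simp only [hb, abs_of_pos hR'pos] at h1
    linarith
  have hback : ∀ i : Fin 3, ∀ y : Fin 2 → ℝ, F i (Fin.insertNth (α := fun _ => ℝ) i (a i) y) = 0 := by
    intro i y
    apply h0
    intro hmem
    have := hKR hmem
    rw [Metric.mem_ball, dist_zero_right] at this
    have h1 : |((Fin.insertNth (α := fun _ => ℝ) i (a i) y) : Fin 3 → ℝ) i| ≤ ‖(Fin.insertNth (α := fun _ => ℝ) i (a i) y : Fin 3 → ℝ)‖ := by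
      simpa using norm_le_pi_norm (Fin.insertNth (α := fun _ => ℝ) i (a i) y) i
    rw [Fin.insertNth_apply_same] at h1
    simp only [ha, abs_neg, abs_of_pos hR'pos] at h1
    linarith
  rw [show (∫ x, ∑ i, F' i x (Pi.single i 1)) = ∫ x in Icc a b, ∑ i, F' i x (Pi.single i 1) from ?_, key]
  · refine Finset.sum_eq_zero fun i _ => ?_
    simp only [hfront, hback]
    simp
  · symm
    apply setIntegral_eq_integral_of_forall_compl_eq_zero
    intro x hx
    have hxK : x ∉ K := fun h => hx (hKIcc h)
    refine Finset.sum_eq_zero fun i _ => ?_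
    rw [hF'0 i x hxK]
    rfl

set_option maxHeartbeats 1000000 in
theorem key_identity
    (n : Fin 3 → ℝ) (Ω : Set (Fin 3 → ℝ)) (hΩ : IsOpen Ω)
    (hΩsub : Ω ⊆ {x : Fin 3 → ℝ | x 0 * n 0 + x 1 * n 1 + 2 * x 2 * n 2 > 0})
    (p : ℝ) (hp : 1 < p) (f : (Fin 3 → ℝ) → ℝ)
    (hf : ContDiff ℝ (⊤ : ℕ∞) f) (hfc : HasCompactSupport f) (hfs : tsupport f ⊆ Ω)
    (ε : ℝ) (hε : 0 < ε)
    (hAi : Integrable (AeZ n p f ε)) (hPi : Integrable (PeZ n p f ε)) :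
    (p - 1) * ∫ x, AeZ n p f ε x = ∫ x, PeZ n p f ε x := by
  have hp0 : (0:ℝ) < p := lt_trans one_pos hp
  have hd_pos : ∀ x ∈ Ω, 0 < dZ n x := fun x hx => hΩsub hx
  have hqε : ∀ x : Fin 3 → ℝ, 0 < qZ n x + ε := fun x => by
    have := qZ_nonneg n x; linarith
  -- basic linear maps
  set pr : Fin 3 → ((Fin 3 → ℝ) →L[ℝ] ℝ) :=
    fun i => ContinuousLinearMap.proj i with hprdef
  set Dd : (Fin 3 → ℝ) →L[ℝ] ℝ := n 0 • pr 0 + n 1 • pr 1 + (2 * n 2) • pr 2 with hDddef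
  set Da : (Fin 3 → ℝ) →L[ℝ] ℝ := (4 * n 2) • pr 1 with hDadef
  set Db : (Fin 3 → ℝ) →L[ℝ] ℝ := (-(4 * n 2)) • pr 0 with hDbdef
  have hprapp : ∀ (i : Fin 3) (y : Fin 3 → ℝ), pr i y = y i := fun i y => rfl
  have hDdapp : ∀ y : Fin 3 → ℝ, Dd y = n 0 * y 0 + n 1 * y 1 + 2 * n 2 * y 2 := by
    intro y
    simp only [hDddef, ContinuousLinearMap.add_apply, ContinuousLinearMap.coe_smul',
      Pi.smul_apply, hprapp, smul_eq_mul]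
  have hDaapp : ∀ y : Fin 3 → ℝ, Da y = 4 * n 2 * y 1 := by
    intro y
    simp only [hDadef, ContinuousLinearMap.coe_smul', Pi.smul_apply, hprapp, smul_eq_mul]
  have hDbapp : ∀ y : Fin 3 → ℝ, Db y = -(4 * n 2) * y 0 := by
    intro y
    simp only [hDbdef, ContinuousLinearMap.coe_smul', Pi.smul_apply, hprapp, smul_eq_mul]
  have hderivd : ∀ x, HasFDerivAt (dZ n) Dd x := by
    intro x
    apply Dd.hasFDerivAt.congr_of_eventuallyEq
    filter_upwards with y
    rw [hDdapp y, dZ]; ring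
  have hderiva : ∀ x, HasFDerivAt (aZ n) Da x := by
    intro x
    apply (Da.hasFDerivAt.const_add (n 0)).congr_of_eventuallyEq
    filter_upwards with y
    rw [aZ]; rw [hDaapp y]; ring
  have hderivb : ∀ x, HasFDerivAt (bZ n) Db x := by
    intro x
    apply (Db.hasFDerivAt.const_add (n 1)).congr_of_eventuallyEq
    filter_upwards with y
    rw [bZ]; rw [hDbapp y]; ring
  have hderivq : ∀ x, HasFDerivAt (qZ n)
      ((2 * aZ n x) • Da + (2 * bZ n x) • Db) x := by
    intro x
    have h1 := ((hderiva x).mul (hderiva x)).add ((hderivb x).mul (hderivb x))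
    have h2 : qZ n = fun y => aZ n y * aZ n y + bZ n y * bZ n y := by
      funext y; rw [qZ]; ring
    rw [h2]
    refine h1.congr_fderiv ?_
    ext v
    simp only [ContinuousLinearMap.add_apply, ContinuousLinearMap.coe_smul',
      Pi.smul_apply, smul_eq_mul]
    ring
  -- scalar functions
  set φ : (Fin 3 → ℝ) → ℝ := fun x => |f x| ^ p with hφdef
  set σ : (Fin 3 → ℝ) → ℝ := fun x => p * |f x| ^ (p - 2) * f x with hσdef
  set ψ : (Fin 3 → ℝ) → ℝ := fun x => (qZ n x + ε) ^ ((p - 2) / 2) with hψdef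
  set rr : (Fin 3 → ℝ) → ℝ := fun x => dZ n x ^ (-(p - 1)) with hrrdef
  set F1 : (Fin 3 → ℝ) → ℝ := fun x => φ x * (ψ x * (aZ n x * rr x)) with hF1def
  set F2 : (Fin 3 → ℝ) → ℝ := fun x => φ x * (ψ x * (bZ n x * rr x)) with hF2def
  set F3 : (Fin 3 → ℝ) → ℝ := fun x => 2 * x 1 * F1 x - 2 * x 0 * F2 x with hF3def
  set Dφ : (Fin 3 → ℝ) → ((Fin 3 → ℝ) →L[ℝ] ℝ) := fun x => σ x • fderiv ℝ f x with hDφdef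
  set Dψ : (Fin 3 → ℝ) → ((Fin 3 → ℝ) →L[ℝ] ℝ) := fun x =>
    ((p - 2) / 2 * (qZ n x + ε) ^ ((p - 2) / 2 - 1)) •
      ((2 * aZ n x) • Da + (2 * bZ n x) • Db) with hDψdef
  set Dr : (Fin 3 → ℝ) → ((Fin 3 → ℝ) →L[ℝ] ℝ) := fun x =>
    (-(p - 1) * dZ n x ^ (-(p - 1) - 1)) • Dd with hDrdef
  set L1 : (Fin 3 → ℝ) → ((Fin 3 → ℝ) →L[ℝ] ℝ) := fun x =>
    (ψ x * (aZ n x * rr x)) • Dφ x +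
      φ x • ((aZ n x * rr x) • Dψ x + (ψ x * rr x) • Da + (ψ x * aZ n x) • Dr x) with hL1def
  set L2 : (Fin 3 → ℝ) → ((Fin 3 → ℝ) →L[ℝ] ℝ) := fun x =>
    (ψ x * (bZ n x * rr x)) • Dφ x +
      φ x • ((bZ n x * rr x) • Dψ x + (ψ x * rr x) • Db + (ψ x * bZ n x) • Dr x) with hL2def
  set L3 : (Fin 3 → ℝ) → ((Fin 3 → ℝ) →L[ℝ] ℝ) := fun x =>
    ((2 * F1 x) • pr 1 + (2 * x 1) • L1 x) -
      ((2 * F2 x) • pr 0 + (2 * x 0) • L2 x) with hL3def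
  have hfzero : ∀ x ∉ tsupport f, f x = 0 := fun x hx => image_eq_zero_of_notMem_tsupport hx
  have hopenK : IsOpen (tsupport f)ᶜ := hfc.isClosed.isOpen_compl
  -- application formulas
  have hL1app : ∀ x v, L1 x v =
      (ψ x * (aZ n x * rr x)) * (σ x * fderiv ℝ f x v) +
        (φ x * ((aZ n x * rr x) *
            (((p - 2) / 2 * (qZ n x + ε) ^ ((p - 2) / 2 - 1)) *
              ((2 * aZ n x) * Da v + (2 * bZ n x) * Db v))) +
          φ x * ((ψ x * rr x) * Da v) +
          φ x * ((ψ x * aZ n x) * ((-(p - 1) * dZ n x ^ (-(p - 1) - 1)) * Dd v))) := by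
    intro x v
    simp only [hL1def, hDφdef, hDψdef, hDrdef, ContinuousLinearMap.add_apply,
      ContinuousLinearMap.coe_smul', Pi.smul_apply, smul_eq_mul]
    ring
  have hL2app : ∀ x v, L2 x v =
      (ψ x * (bZ n x * rr x)) * (σ x * fderiv ℝ f x v) +
        (φ x * ((bZ n x * rr x) *
            (((p - 2) / 2 * (qZ n x + ε) ^ ((p - 2) / 2 - 1)) *
              ((2 * aZ n x) * Da v + (2 * bZ n x) * Db v))) +
          φ x * ((ψ x * rr x) * Db v) +
          φ x * ((ψ x * bZ n x) * ((-(p - 1) * dZ n x ^ (-(p - 1) - 1)) * Dd v))) := by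
    intro x v
    simp only [hL2def, hDφdef, hDψdef, hDrdef, ContinuousLinearMap.add_apply,
      ContinuousLinearMap.coe_smul', Pi.smul_apply, smul_eq_mul]
    ring
  have hL3app : ∀ x v, L3 x v =
      (2 * F1 x) * v 1 + (2 * x 1) * L1 x v - ((2 * F2 x) * v 0 + (2 * x 0) * L2 x v) := by
    intro x v
    simp only [hL3def, ContinuousLinearMap.sub_apply, ContinuousLinearMap.add_apply,
      ContinuousLinearMap.coe_smul', Pi.smul_apply, smul_eq_mul, hprapp]
  -- derivatives of F1 and F2
  have hL12 : ∀ x, HasFDerivAt F1 (L1 x) x ∧ HasFDerivAt F2 (L2 x) x := by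
    intro x
    by_cases hx : x ∈ Ω
    · have hdx := hd_pos x hx
      have hf' : HasFDerivAt f (fderiv ℝ f x) x :=
        (hf.differentiable (by simp) x).hasFDerivAt
      have hφ' : HasFDerivAt φ (Dφ x) x :=
        (hasDerivAt_abs_rpow (f x) hp).comp_hasFDerivAt x hf'
      have hψ' : HasFDerivAt ψ (Dψ x) x := by
        have hin : HasFDerivAt (fun y => qZ n y + ε)
            ((2 * aZ n x) • Da + (2 * bZ n x) • Db) x := (hderivq x).add_const ε
        exact (Real.hasDerivAt_rpow_const
          (x := qZ n x + ε) (p := (p - 2) / 2) (Or.inl (hqε x).ne')).comp_hasFDerivAt x hin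
      have hr' : HasFDerivAt rr (Dr x) x :=
        (Real.hasDerivAt_rpow_const
          (x := dZ n x) (p := -(p - 1)) (Or.inl hdx.ne')).comp_hasFDerivAt x (hderivd x)
      constructor
      · have har : HasFDerivAt (fun y => aZ n y * rr y)
            (aZ n x • Dr x + rr x • Da) x := (hderiva x).mul hr'
        have hfull := hφ'.mul (hψ'.mul har)
        refine hfull.congr_fderiv ?_
        ext v
        rw [hL1app]
        simp only [hDφdef, hDψdef, hDrdef, ContinuousLinearMap.add_apply,
          ContinuousLinearMap.coe_smul', Pi.smul_apply, smul_eq_mul, Pi.mul_apply]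
        ring
      · have hbr : HasFDerivAt (fun y => bZ n y * rr y)
            (bZ n x • Dr x + rr x • Db) x := (hderivb x).mul hr'
        have hfull := hφ'.mul (hψ'.mul hbr)
        refine hfull.congr_fderiv ?_
        ext v
        rw [hL2app]
        simp only [hDφdef, hDψdef, hDrdef, ContinuousLinearMap.add_apply,
          ContinuousLinearMap.coe_smul', Pi.smul_apply, smul_eq_mul, Pi.mul_apply]
        ring
    · have hxK : x ∉ tsupport f := fun h => hx (hfs h)
      have hfx : f x = 0 := hfzero x hxK
      have hev1 : F1 =ᶠ[nhds x] fun _ => (0:ℝ) := by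
        filter_upwards [hopenK.mem_nhds hxK] with y hy
        simp [hF1def, hφdef, hfzero y hy, Real.zero_rpow hp0.ne']
      have hev2 : F2 =ᶠ[nhds x] fun _ => (0:ℝ) := by
        filter_upwards [hopenK.mem_nhds hxK] with y hy
        simp [hF2def, hφdef, hfzero y hy, Real.zero_rpow hp0.ne']
      have hL1x : L1 x = 0 := by
        ext v
        rw [hL1app]
        simp [hσdef, hφdef, hfx, Real.zero_rpow hp0.ne']
      have hL2x : L2 x = 0 := by
        ext v
        rw [hL2app]
        simp [hσdef, hφdef, hfx, Real.zero_rpow hp0.ne']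
      refine ⟨?_, ?_⟩
      · rw [hL1x]; exact (hasFDerivAt_const (0:ℝ) x).congr_of_eventuallyEq hev1
      · rw [hL2x]; exact (hasFDerivAt_const (0:ℝ) x).congr_of_eventuallyEq hev2
  have hL3 : ∀ x, HasFDerivAt F3 (L3 x) x := by
    intro x
    have h1 : HasFDerivAt (fun y : Fin 3 → ℝ => 2 * y 1) ((2:ℝ) • pr 1) x :=
      (pr 1).hasFDerivAt.const_mul (2:ℝ)
    have h0 : HasFDerivAt (fun y : Fin 3 → ℝ => 2 * y 0) ((2:ℝ) • pr 0) x :=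
      (pr 0).hasFDerivAt.const_mul (2:ℝ)
    have hm := (h1.mul (hL12 x).1).sub (h0.mul (hL12 x).2)
    refine hm.congr_fderiv ?_
    ext v
    rw [hL3app]
    simp only [ContinuousLinearMap.sub_apply, ContinuousLinearMap.add_apply,
      ContinuousLinearMap.coe_smul', Pi.smul_apply, smul_eq_mul, hprapp]
    ring
  -- single-vector values
  have hs00 : (Pi.single 0 (1:ℝ) : Fin 3 → ℝ) 0 = 1 := Pi.single_eq_same _ _
  have hs11 : (Pi.single 1 (1:ℝ) : Fin 3 → ℝ) 1 = 1 := Pi.single_eq_same _ _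
  have hs22 : (Pi.single 2 (1:ℝ) : Fin 3 → ℝ) 2 = 1 := Pi.single_eq_same _ _
  have hs01 : (Pi.single 0 (1:ℝ) : Fin 3 → ℝ) 1 = 0 := Pi.single_eq_of_ne (by decide) _
  have hs02 : (Pi.single 0 (1:ℝ) : Fin 3 → ℝ) 2 = 0 := Pi.single_eq_of_ne (by decide) _
  have hs10 : (Pi.single 1 (1:ℝ) : Fin 3 → ℝ) 0 = 0 := Pi.single_eq_of_ne (by decide) _
  have hs12 : (Pi.single 1 (1:ℝ) : Fin 3 → ℝ) 2 = 0 := Pi.single_eq_of_ne (by decide) _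
  have hs20 : (Pi.single 2 (1:ℝ) : Fin 3 → ℝ) 0 = 0 := Pi.single_eq_of_ne (by decide) _
  have hs21 : (Pi.single 2 (1:ℝ) : Fin 3 → ℝ) 1 = 0 := Pi.single_eq_of_ne (by decide) _
  -- divergence identity
  have hdiv : ∀ x, L1 x (Pi.single 0 1) + L2 x (Pi.single 1 1) + L3 x (Pi.single 2 1)
      = PeZ n p f ε x - (p - 1) * AeZ n p f ε x := by
    intro x
    have hexp : dZ n x ^ (-(p - 1) - 1) = dZ n x ^ (-p) := by
      norm_num
    rw [hL3app, hL1app, hL1app, hL2app, hL2app, PeZ, AeZ, X1H_eq, X2H_eq]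
    rw [hDaapp, hDaapp, hDaapp, hDbapp, hDbapp, hDbapp, hDdapp, hDdapp, hDdapp]
    rw [hs00, hs01, hs02, hs10, hs11, hs12, hs20, hs21, hs22]
    rw [hexp]
    simp only [hφdef, hσdef, hψdef, hrrdef, qZ, aZ, bZ]
    ring
  -- apply the divergence theorem
  have hzero : ∀ i, ∀ x ∉ tsupport f, (![F1, F2, F3] : Fin 3 → _) i x = 0 := by
    intro i x hx
    have hfx : f x = 0 := hfzero x hx
    have h1 : F1 x = 0 := by simp [hF1def, hφdef, hfx, Real.zero_rpow hp0.ne']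
    have h2 : F2 x = 0 := by simp [hF2def, hφdef, hfx, Real.zero_rpow hp0.ne']
    fin_cases i
    · exact h1
    · exact h2
    · show F3 x = 0
      simp [hF3def, h1, h2]
  have hFderiv : ∀ (i : Fin 3) x,
      HasFDerivAt ((![F1, F2, F3] : Fin 3 → _) i) ((![L1, L2, L3] : Fin 3 → _) i x) x := by
    intro i x
    fin_cases i
    · exact (hL12 x).1
    · exact (hL12 x).2
    · exact hL3 x
  have hsum : (fun x => ∑ i, (![L1, L2, L3] : Fin 3 → _) i x (Pi.single i 1))
      = fun x => PeZ n p f ε x - (p - 1) * AeZ n p f ε x := by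
    funext x
    rw [Fin.sum_univ_three]
    have e0 : (![L1, L2, L3] : Fin 3 → _) 0 = L1 := rfl
    have e1 : (![L1, L2, L3] : Fin 3 → _) 1 = L2 := rfl
    have e2 : (![L1, L2, L3] : Fin 3 → _) 2 = L3 := rfl
    rw [e0, e1, e2, hdiv x]
  have hint : Integrable (fun x => ∑ i, (![L1, L2, L3] : Fin 3 → _) i x (Pi.single i 1)) := by
    rw [hsum]
    exact hPi.sub (hAi.const_mul (p - 1))
  have hmain := integral_divsum_eq_zero ![F1, F2, F3] ![L1, L2, L3] (fun i x => hFderiv i x)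
    (tsupport f) hfc hzero hint
  rw [hsum] at hmain
  rw [integral_sub hPi (hAi.const_mul (p - 1)), integral_const_mul] at hmain
  linarith

lemma continuous_glue {g : (Fin 3 → ℝ) → ℝ} {U K : Set (Fin 3 → ℝ)} (hU : IsOpen U)
    (hKU : K ⊆ U) (hKcl : IsClosed K) (hg : ContinuousOn g U) (h0 : ∀ x ∉ K, g x = 0) :
    Continuous g := by
  rw [continuous_iff_continuousAt]
  intro x
  by_cases hx : x ∈ U
  · exact hg.continuousAt (hU.mem_nhds hx)
  · have hxK : x ∉ K := fun h => hx (hKU h)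
    have hev : (fun _ => (0:ℝ)) =ᶠ[nhds x] g := by
      filter_upwards [hKcl.isOpen_compl.mem_nhds hxK] with y hy
      exact (h0 y hy).symm
    exact ContinuousAt.congr continuousAt_const hev

lemma cs_bound (a b X Y : ℝ) :
    |a * X + b * Y| ≤ Real.sqrt (a ^ 2 + b ^ 2) * Real.sqrt (X ^ 2 + Y ^ 2) := by
  rw [← Real.sqrt_mul (by positivity), ← Real.sqrt_sq_eq_abs]
  apply Real.sqrt_le_sqrt
  nlinarith [sq_nonneg (a * Y - b * X)]

end HardyAux

open HardyAux

set_option maxHeartbeats 1600000 in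
/-- the geometric Hardy inequality on starshaped sets in the
Heisenberg group, with `⟨Z(x), n⟩ = x₁n₁ + x₂n₂ + 2x₃n₃`. -/
theorem stmt_3 (n : Fin 3 → ℝ) (hn : n 0 ^ 2 + n 1 ^ 2 + n 2 ^ 2 = 1)
    (Ω : Set (Fin 3 → ℝ)) (hΩ : IsOpen Ω)
    (hΩsub : Ω ⊆ {x : Fin 3 → ℝ | x 0 * n 0 + x 1 * n 1 + 2 * x 2 * n 2 > 0})
    (p : ℝ) (hp : 1 < p)
    (f : (Fin 3 → ℝ) → ℝ)
    (hf : ContDiff ℝ (⊤ : ℕ∞) f) (hfc : HasCompactSupport f)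
    (hfs : tsupport f ⊆ Ω) :
    ∫ x in Ω, ((X1H f x) ^ 2 + (X2H f x) ^ 2) ^ (p / 2) ≥
      ((p - 1) / p) ^ p *
        ∫ x in Ω,
          ((n 0 + 4 * x 1 * n 2) ^ 2 + (n 1 - 4 * x 0 * n 2) ^ 2) ^ (p / 2)
            / |x 0 * n 0 + x 1 * n 1 + 2 * x 2 * n 2| ^ p * |f x| ^ p := by
  classical
  have hp0 : (0:ℝ) < p := by linarith
  have hp1 : (0:ℝ) < p - 1 := by linarith
  have hKc : IsCompact (tsupport f) := hfc
  have hd_pos : ∀ x ∈ Ω, 0 < dZ n x := fun x hx => hΩsub hx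
  have hfzero : ∀ x ∉ tsupport f, f x = 0 := fun x hx => image_eq_zero_of_notMem_tsupport hx
  -- continuity of basic pieces
  have hfc' : Continuous f := hf.continuous
  have hfd : Continuous (fderiv ℝ f) := hf.continuous_fderiv (by simp)
  have happ : ∀ w : Fin 3 → ℝ, Continuous fun x => fderiv ℝ f x w := by
    intro w
    exact (ContinuousLinearMap.apply ℝ ℝ w).continuous.comp hfd
  have hcoord : ∀ i : Fin 3, Continuous fun x : Fin 3 → ℝ => x i := fun i => continuous_apply i
  have hX1c : Continuous (X1H f) := by
    have : (X1H f) = fun x => fderiv ℝ f x (Pi.single 0 1) +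
        2 * x 1 * fderiv ℝ f x (Pi.single 2 1) := by
      funext x; exact X1H_eq f x
    rw [this]
    exact (happ _).add ((continuous_const.mul (hcoord 1)).mul (happ _))
  have hX2c : Continuous (X2H f) := by
    have : (X2H f) = fun x => fderiv ℝ f x (Pi.single 1 1) -
        2 * x 0 * fderiv ℝ f x (Pi.single 2 1) := by
      funext x; exact X2H_eq f x
    rw [this]
    exact (happ _).sub ((continuous_const.mul (hcoord 0)).mul (happ _))
  have hX1z : ∀ x ∉ tsupport f, X1H f x = 0 := by
    intro x hx
    have : fderiv ℝ f x = 0 := by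
      by_contra h
      exact hx (support_fderiv_subset ℝ (by simpa [Function.mem_support] using h))
    simp [X1H, this]
  have hX2z : ∀ x ∉ tsupport f, X2H f x = 0 := by
    intro x hx
    have : fderiv ℝ f x = 0 := by
      by_contra h
      exact hx (support_fderiv_subset ℝ (by simpa [Function.mem_support] using h))
    simp [X2H, this]
  have haac : Continuous (aZ n) := by
    unfold aZ
    exact continuous_const.add ((continuous_const.mul (hcoord 1)).mul continuous_const)
  have hbbc : Continuous (bZ n) := by
    unfold bZ
    exact continuous_const.sub ((continuous_const.mul (hcoord 0)).mul continuous_const)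
  have hddc : Continuous (dZ n) := by
    unfold dZ
    exact (((hcoord 0).mul continuous_const).add ((hcoord 1).mul continuous_const)).add
      ((continuous_const.mul (hcoord 2)).mul continuous_const)
  have hqqc : Continuous (qZ n) := by
    unfold qZ
    exact (haac.pow 2).add (hbbc.pow 2)
  have hphic : Continuous fun x => |f x| ^ p :=
    (hfc'.abs).rpow_const fun x => Or.inr hp0.le
  have hphic1 : Continuous fun x => |f x| ^ (p - 1) :=
    (hfc'.abs).rpow_const fun x => Or.inr hp1.le
  -- main functions
  set v : (Fin 3 → ℝ) → ℝ := fun x => ((X1H f x) ^ 2 + (X2H f x) ^ 2) ^ (p / 2) with hvdef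
  set u : (Fin 3 → ℝ) → ℝ := fun x => |f x| ^ p * (qZ n x ^ (p / 2) * dZ n x ^ (-p)) with hudef
  set PP : (Fin 3 → ℝ) → ℝ := fun x => qZ n x ^ ((p - 2) / 2) *
    (dZ n x ^ (-(p - 1)) *
      ((p * |f x| ^ (p - 2) * f x) * (aZ n x * X1H f x + bZ n x * X2H f x))) with hPPdef
  set W : (Fin 3 → ℝ) → ℝ :=
    fun x => |f x| ^ p * ((qZ n x + 1) ^ (p / 2) * |dZ n x ^ (-p)|) with hWdef
  set W2 : (Fin 3 → ℝ) → ℝ := fun x => (qZ n x + 1) ^ ((p - 1) / 2) *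
    (|dZ n x ^ (-(p - 1))| * ((p * |f x| ^ (p - 1)) *
      Real.sqrt ((X1H f x) ^ 2 + (X2H f x) ^ 2))) with hW2def
  -- v facts
  have hvc : Continuous v := ((hX1c.pow 2).add (hX2c.pow 2)).rpow_const
    fun x => Or.inr (by positivity)
  have hvnn : ∀ x, 0 ≤ v x := fun x => Real.rpow_nonneg (by positivity) _
  have hv0 : ∀ x ∉ tsupport f, v x = 0 := by
    intro x hx
    simp [hvdef, hX1z x hx, hX2z x hx, Real.zero_rpow (by positivity : p / 2 ≠ 0)]
  have hvint : Integrable v :=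
    hvc.integrable_of_hasCompactSupport (HasCompactSupport.intro hKc hv0)
  -- u facts
  have hu0 : ∀ x ∉ tsupport f, u x = 0 := by
    intro x hx
    simp [hudef, hfzero x hx, Real.zero_rpow hp0.ne']
  have huc : Continuous u := by
    apply continuous_glue hΩ hfs hKc.isClosed _ hu0
    apply ContinuousOn.mul hphic.continuousOn
    apply ContinuousOn.mul (hqqc.rpow_const fun x => Or.inr (by positivity)).continuousOn
    exact ContinuousOn.rpow_const hddc.continuousOn
      fun x hx => Or.inl (hd_pos x hx).ne'
  have hunn : ∀ x, 0 ≤ u x := by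
    intro x
    by_cases hx : x ∈ Ω
    · have := hd_pos x hx
      apply mul_nonneg (Real.rpow_nonneg (abs_nonneg _) _)
      exact mul_nonneg (Real.rpow_nonneg (qZ_nonneg n x) _) (Real.rpow_nonneg this.le _)
    · rw [hu0 x fun h => hx (hfs h)]
  have huint : Integrable u :=
    huc.integrable_of_hasCompactSupport (HasCompactSupport.intro hKc hu0)
  -- W facts
  have hW0 : ∀ x ∉ tsupport f, W x = 0 := by
    intro x hx
    simp [hWdef, hfzero x hx, Real.zero_rpow hp0.ne']
  have hWc : Continuous W := by
    apply continuous_glue hΩ hfs hKc.isClosed _ hW0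
    apply ContinuousOn.mul hphic.continuousOn
    apply ContinuousOn.mul
      (((hqqc.add continuous_const).rpow_const fun x => Or.inr (by positivity)).continuousOn)
    exact (ContinuousOn.rpow_const hddc.continuousOn
      fun x hx => Or.inl (hd_pos x hx).ne').abs
  have hWint : Integrable W :=
    hWc.integrable_of_hasCompactSupport (HasCompactSupport.intro hKc hW0)
  -- W2 facts
  have hW20 : ∀ x ∉ tsupport f, W2 x = 0 := by
    intro x hx
    simp [hW2def, hfzero x hx, Real.zero_rpow hp1.ne']
  have hW2c : Continuous W2 := by
    apply continuous_glue hΩ hfs hKc.isClosed _ hW20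
    apply ContinuousOn.mul
      (((hqqc.add continuous_const).rpow_const fun x => Or.inr (by positivity)).continuousOn)
    apply ContinuousOn.mul
      ((ContinuousOn.rpow_const hddc.continuousOn fun x hx => Or.inl (hd_pos x hx).ne').abs)
    exact ((continuous_const.mul hphic1).mul
      (((hX1c.pow 2).add (hX2c.pow 2)).sqrt)).continuousOn
  have hW2int : Integrable W2 :=
    hW2c.integrable_of_hasCompactSupport (HasCompactSupport.intro hKc hW20)
  -- measurability of the approximating integrands
  have hdm : Measurable fun x => dZ n x ^ (-p) := hddc.measurable.pow_const _
  have hdm1 : Measurable fun x => dZ n x ^ (-(p - 1)) := hddc.measurable.pow_const _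
  have hsig : Measurable fun x => p * |f x| ^ (p - 2) * f x :=
    (measurable_const.mul ((hfc'.abs.measurable).pow_const (p - 2))).mul hfc'.measurable
  have hAmeas : ∀ ε : ℝ, AEStronglyMeasurable (AeZ n p f ε) volume := by
    intro ε
    apply Measurable.aestronglyMeasurable
    unfold AeZ
    exact (hphic.measurable).mul
      ((((hqqc.add continuous_const).measurable).pow_const _).mul
        (hqqc.measurable.mul hdm))
  have hPmeas : ∀ ε : ℝ, AEStronglyMeasurable (PeZ n p f ε) volume := by
    intro ε
    apply Measurable.aestronglyMeasurable
    unfold PeZ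
    exact (((hqqc.add continuous_const).measurable).pow_const _).mul
      (hdm1.mul (hsig.mul ((haac.measurable.mul hX1c.measurable).add
        (hbbc.measurable.mul hX2c.measurable))))
  have hPPmeas : AEStronglyMeasurable PP volume := by
    apply Measurable.aestronglyMeasurable
    rw [hPPdef]
    exact ((hqqc.measurable).pow_const _).mul
      (hdm1.mul (hsig.mul ((haac.measurable.mul hX1c.measurable).add
        (hbbc.measurable.mul hX2c.measurable))))
  -- absolute value of sigma
  have hsigabs : ∀ x, |p * |f x| ^ (p - 2) * f x| = p * |f x| ^ (p - 1) := by
    intro x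
    rcases eq_or_ne (f x) 0 with h | h
    · simp [h, Real.zero_rpow (by linarith : p - 1 ≠ 0)]
    · rw [abs_mul, abs_mul, abs_of_pos hp0,
        abs_of_nonneg (Real.rpow_nonneg (abs_nonneg _) _), mul_assoc,
        ← Real.rpow_add_one (abs_ne_zero.mpr h)]
      rw [show p - 2 + 1 = p - 1 by ring]
  -- pointwise bounds
  have hAbd : ∀ ε : ℝ, 0 < ε → ε ≤ 1 → ∀ x, |AeZ n p f ε x| ≤ W x := by
    intro ε hε hε1 x
    have hqe : 0 < qZ n x + ε := by have := qZ_nonneg n x; linarith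
    have h1 : (qZ n x + ε) ^ ((p - 2) / 2) * qZ n x ≤ (qZ n x + 1) ^ (p / 2) := by
      calc (qZ n x + ε) ^ ((p - 2) / 2) * qZ n x
          ≤ (qZ n x + ε) ^ ((p - 2) / 2) * (qZ n x + ε) :=
            mul_le_mul_of_nonneg_left (by linarith) (Real.rpow_nonneg hqe.le _)
        _ = (qZ n x + ε) ^ ((p - 2) / 2 + 1) := (Real.rpow_add_one hqe.ne' _).symm
        _ = (qZ n x + ε) ^ (p / 2) := by rw [show (p - 2) / 2 + 1 = p / 2 by ring]
        _ ≤ (qZ n x + 1) ^ (p / 2) :=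
            Real.rpow_le_rpow hqe.le (by linarith) (by positivity)
    rw [AeZ, hWdef, abs_mul, abs_mul, abs_mul,
      abs_of_nonneg (Real.rpow_nonneg (abs_nonneg _) _),
      abs_of_nonneg (Real.rpow_nonneg hqe.le _), abs_of_nonneg (qZ_nonneg n x)]
    apply mul_le_mul_of_nonneg_left _ (Real.rpow_nonneg (abs_nonneg _) _)
    calc (qZ n x + ε) ^ ((p - 2) / 2) * (qZ n x * |dZ n x ^ (-p)|)
        = ((qZ n x + ε) ^ ((p - 2) / 2) * qZ n x) * |dZ n x ^ (-p)| := by ring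
      _ ≤ (qZ n x + 1) ^ (p / 2) * |dZ n x ^ (-p)| :=
          mul_le_mul_of_nonneg_right h1 (abs_nonneg _)
  have hPbd : ∀ ε : ℝ, 0 < ε → ε ≤ 1 → ∀ x, |PeZ n p f ε x| ≤ W2 x := by
    intro ε hε hε1 x
    have hqe : 0 < qZ n x + ε := by have := qZ_nonneg n x; linarith
    have hψs : (qZ n x + ε) ^ ((p - 2) / 2) * Real.sqrt (qZ n x)
        ≤ (qZ n x + 1) ^ ((p - 1) / 2) := by
      calc (qZ n x + ε) ^ ((p - 2) / 2) * Real.sqrt (qZ n x)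
          ≤ (qZ n x + ε) ^ ((p - 2) / 2) * Real.sqrt (qZ n x + ε) :=
            mul_le_mul_of_nonneg_left (Real.sqrt_le_sqrt (by linarith))
              (Real.rpow_nonneg hqe.le _)
        _ = (qZ n x + ε) ^ ((p - 2) / 2 + 1 / 2) := by
            rw [Real.sqrt_eq_rpow, ← Real.rpow_add hqe]
        _ = (qZ n x + ε) ^ ((p - 1) / 2) := by rw [show (p - 2) / 2 + 1 / 2 = (p - 1) / 2 by ring]
        _ ≤ (qZ n x + 1) ^ ((p - 1) / 2) :=
            Real.rpow_le_rpow hqe.le (by linarith) (by positivity)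
    rw [PeZ, hW2def, abs_mul, abs_mul, abs_mul,
      abs_of_nonneg (Real.rpow_nonneg hqe.le _), hsigabs]
    calc (qZ n x + ε) ^ ((p - 2) / 2) * (|dZ n x ^ (-(p - 1))| *
          (p * |f x| ^ (p - 1) * |aZ n x * X1H f x + bZ n x * X2H f x|))
        ≤ (qZ n x + ε) ^ ((p - 2) / 2) * (|dZ n x ^ (-(p - 1))| *
          (p * |f x| ^ (p - 1) * (Real.sqrt (qZ n x) *
            Real.sqrt ((X1H f x) ^ 2 + (X2H f x) ^ 2)))) := by
          apply mul_le_mul_of_nonneg_left _ (Real.rpow_nonneg hqe.le _)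
          apply mul_le_mul_of_nonneg_left _ (abs_nonneg _)
          apply mul_le_mul_of_nonneg_left _ (by positivity)
          exact cs_bound _ _ _ _
      _ = ((qZ n x + ε) ^ ((p - 2) / 2) * Real.sqrt (qZ n x)) *
          (|dZ n x ^ (-(p - 1))| * ((p * |f x| ^ (p - 1)) *
            Real.sqrt ((X1H f x) ^ 2 + (X2H f x) ^ 2))) := by ring
      _ ≤ (qZ n x + 1) ^ ((p - 1) / 2) *
          (|dZ n x ^ (-(p - 1))| * ((p * |f x| ^ (p - 1)) *
            Real.sqrt ((X1H f x) ^ 2 + (X2H f x) ^ 2))) := by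
          apply mul_le_mul_of_nonneg_right hψs
          positivity
  have hAint : ∀ ε : ℝ, 0 < ε → ε ≤ 1 → Integrable (AeZ n p f ε) := by
    intro ε hε hε1
    apply hWint.mono' (hAmeas ε)
    exact Filter.Eventually.of_forall fun x => by
      rw [Real.norm_eq_abs]; exact hAbd ε hε hε1 x
  have hPint : ∀ ε : ℝ, 0 < ε → ε ≤ 1 → Integrable (PeZ n p f ε) := by
    intro ε hε hε1
    apply hW2int.mono' (hPmeas ε)
    exact Filter.Eventually.of_forall fun x => by
      rw [Real.norm_eq_abs]; exact hPbd ε hε hε1 x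
  -- the approximating sequence
  set εs : ℕ → ℝ := fun k => 1 / (k + 1) with hεsdef
  have hεsp : ∀ k, 0 < εs k := fun k => by positivity
  have hεs1 : ∀ k, εs k ≤ 1 := by
    intro k
    rw [hεsdef]
    rw [div_le_one (by positivity)]
    simp
  have hεs0 : Tendsto εs atTop (𝓝 0) := tendsto_one_div_add_atTop_nhds_zero_nat
  have hkey : ∀ k : ℕ, (p - 1) * ∫ x, AeZ n p f (εs k) x = ∫ x, PeZ n p f (εs k) x :=
    fun k => key_identity n Ω hΩ hΩsub p hp f hf hfc hfs (εs k) (hεsp k)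
      (hAint _ (hεsp k) (hεs1 k)) (hPint _ (hεsp k) (hεs1 k))
  -- dominated convergence for the A-side
  have hTA : Tendsto (fun k => ∫ x, AeZ n p f (εs k) x) atTop (𝓝 (∫ x, u x)) := by
    apply tendsto_integral_of_dominated_convergence W (fun k => hAmeas _) hWint
    · exact fun k => Filter.Eventually.of_forall fun x => by
        rw [Real.norm_eq_abs]; exact hAbd _ (hεsp k) (hεs1 k) x
    · apply Filter.Eventually.of_forall
      intro x
      rcases eq_or_lt_of_le (qZ_nonneg n x) with hq | hq
      · have hz : ∀ k, AeZ n p f (εs k) x = 0 := by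
          intro k; simp [AeZ, ← hq]
        have hz2 : u x = 0 := by
          simp [hudef, ← hq, Real.zero_rpow (by positivity : p / 2 ≠ 0)]
        simp only [hz, hz2]
        exact tendsto_const_nhds
      · have h1 : Tendsto (fun k => qZ n x + εs k) atTop (𝓝 (qZ n x)) := by
          simpa using tendsto_const_nhds.add hεs0
        have h2 := ((Real.continuousAt_rpow_const _ ((p - 2) / 2)
          (Or.inl hq.ne')).tendsto).comp h1
        have h3 := (h2.mul_const (qZ n x * dZ n x ^ (-p))).const_mul (|f x| ^ p)
        have h4 : |f x| ^ p * (qZ n x ^ ((p - 2) / 2) * (qZ n x * dZ n x ^ (-p)))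
            = u x := by
          rw [hudef]
          have : qZ n x ^ ((p - 2) / 2) * (qZ n x * dZ n x ^ (-p))
              = (qZ n x ^ ((p - 2) / 2) * qZ n x) * dZ n x ^ (-p) := by ring
          rw [this, ← Real.rpow_add_one hq.ne', show (p - 2) / 2 + 1 = p / 2 by ring]
        rw [← h4]
        exact h3
  -- dominated convergence for the P-side
  have hqz_ab : ∀ x, qZ n x = 0 → aZ n x = 0 ∧ bZ n x = 0 := by
    intro x hq
    constructor <;> nlinarith [sq_nonneg (aZ n x), sq_nonneg (bZ n x),
      congrArg id hq, qZ_nonneg n x, (by rw [qZ] at hq; exact hq : aZ n x ^ 2 + bZ n x ^ 2 = 0)]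
  have hTP : Tendsto (fun k => ∫ x, PeZ n p f (εs k) x) atTop (𝓝 (∫ x, PP x)) := by
    apply tendsto_integral_of_dominated_convergence W2 (fun k => hPmeas _) hW2int
    · exact fun k => Filter.Eventually.of_forall fun x => by
        rw [Real.norm_eq_abs]; exact hPbd _ (hεsp k) (hεs1 k) x
    · apply Filter.Eventually.of_forall
      intro x
      rcases eq_or_lt_of_le (qZ_nonneg n x) with hq | hq
      · obtain ⟨ha, hb⟩ := hqz_ab x hq.symm
        have hz : ∀ k, PeZ n p f (εs k) x = 0 := by
          intro k; simp [PeZ, ha, hb]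
        have hz2 : PP x = 0 := by simp [hPPdef, ha, hb]
        simp only [hz, hz2]
        exact tendsto_const_nhds
      · have h1 : Tendsto (fun k => qZ n x + εs k) atTop (𝓝 (qZ n x)) := by
          simpa using tendsto_const_nhds.add hεs0
        have h2 := ((Real.continuousAt_rpow_const _ ((p - 2) / 2)
          (Or.inl hq.ne')).tendsto).comp h1
        exact h2.mul_const _
  -- the limit identity
  have hlim : (p - 1) * (∫ x, u x) = ∫ x, PP x := by
    apply tendsto_nhds_unique _ hTP
    have := hTA.const_mul (p - 1)
    simpa only [hkey] using this
  -- Hölder setup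
  set U : (Fin 3 → ℝ) → ℝ := fun x => u x ^ ((p - 1) / p) with hUdef
  set V : (Fin 3 → ℝ) → ℝ := fun x => v x ^ (1 / p) with hVdef
  have hUc : Continuous U := huc.rpow_const fun x => Or.inr (by positivity)
  have hVc : Continuous V := hvc.rpow_const fun x => Or.inr (by positivity)
  have hU0 : ∀ x ∉ tsupport f, U x = 0 := by
    intro x hx
    show u x ^ ((p - 1) / p) = 0
    rw [hu0 x hx]
    exact Real.zero_rpow (by positivity)
  have hV0 : ∀ x ∉ tsupport f, V x = 0 := by
    intro x hx
    show v x ^ (1 / p) = 0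
    rw [hv0 x hx]
    exact Real.zero_rpow (by positivity)
  have hUnn : ∀ x, 0 ≤ U x := fun x => Real.rpow_nonneg (hunn x) _
  have hVnn : ∀ x, 0 ≤ V x := fun x => Real.rpow_nonneg (hvnn x) _
  -- pointwise bound |PP| ≤ p * (U * V)
  have hGb : ∀ x, |PP x| ≤ p * (U x * V x) := by
    intro x
    by_cases hx : x ∈ Ω
    · rcases eq_or_lt_of_le (qZ_nonneg n x) with hq | hq
      · obtain ⟨ha, hb⟩ := hqz_ab x hq.symm
        have : PP x = 0 := by simp [hPPdef, ha, hb]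
        rw [this, abs_zero]
        have := mul_nonneg (hUnn x) (hVnn x)
        positivity
      · have hdx := hd_pos x hx
        have hU1 : U x = |f x| ^ (p - 1) * (qZ n x ^ ((p - 1) / 2) * dZ n x ^ (-(p - 1))) := by
          show (|f x| ^ p * (qZ n x ^ (p / 2) * dZ n x ^ (-p))) ^ ((p - 1) / p) = _
          rw [Real.mul_rpow (Real.rpow_nonneg (abs_nonneg _) _)
            (mul_nonneg (Real.rpow_nonneg hq.le _) (Real.rpow_nonneg hdx.le _)),
            Real.mul_rpow (Real.rpow_nonneg hq.le _) (Real.rpow_nonneg hdx.le _),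
            ← Real.rpow_mul (abs_nonneg _), ← Real.rpow_mul hq.le, ← Real.rpow_mul hdx.le]
          rw [show p * ((p - 1) / p) = p - 1 by field_simp,
            show p / 2 * ((p - 1) / p) = (p - 1) / 2 by field_simp,
            show -p * ((p - 1) / p) = -(p - 1) by field_simp]
        have hV1 : V x = Real.sqrt ((X1H f x) ^ 2 + (X2H f x) ^ 2) := by
          show ((X1H f x ^ 2 + X2H f x ^ 2) ^ (p / 2)) ^ (1 / p) = _
          rw [← Real.rpow_mul (by positivity),
            show p / 2 * (1 / p) = 1 / 2 by field_simp, Real.sqrt_eq_rpow]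
        have hq12 : qZ n x ^ ((p - 2) / 2) * Real.sqrt (qZ n x)
            = qZ n x ^ ((p - 1) / 2) := by
          rw [Real.sqrt_eq_rpow, ← Real.rpow_add hq,
            show (p - 2) / 2 + 1 / 2 = (p - 1) / 2 by ring]
        rw [hPPdef]
        calc |qZ n x ^ ((p - 2) / 2) * (dZ n x ^ (-(p - 1)) *
              ((p * |f x| ^ (p - 2) * f x) * (aZ n x * X1H f x + bZ n x * X2H f x)))|
            = qZ n x ^ ((p - 2) / 2) * (dZ n x ^ (-(p - 1)) *
              ((p * |f x| ^ (p - 1)) * |aZ n x * X1H f x + bZ n x * X2H f x|)) := by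
              rw [abs_mul, abs_mul, abs_mul, hsigabs,
                abs_of_nonneg (Real.rpow_nonneg hq.le _),
                abs_of_nonneg (Real.rpow_nonneg hdx.le _)]
          _ ≤ qZ n x ^ ((p - 2) / 2) * (dZ n x ^ (-(p - 1)) *
              ((p * |f x| ^ (p - 1)) * (Real.sqrt (qZ n x) *
                Real.sqrt ((X1H f x) ^ 2 + (X2H f x) ^ 2)))) := by
              apply mul_le_mul_of_nonneg_left _ (Real.rpow_nonneg hq.le _)
              apply mul_le_mul_of_nonneg_left _ (Real.rpow_nonneg hdx.le _)
              apply mul_le_mul_of_nonneg_left _ (by positivity)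
              exact cs_bound _ _ _ _
          _ = p * ((|f x| ^ (p - 1) * ((qZ n x ^ ((p - 2) / 2) * Real.sqrt (qZ n x)) *
                dZ n x ^ (-(p - 1)))) *
              Real.sqrt ((X1H f x) ^ 2 + (X2H f x) ^ 2)) := by ring
          _ = p * (U x * V x) := by rw [hq12, hU1, hV1]; try ring
    · have hxK : x ∉ tsupport f := fun h => hx (hfs h)
      have : PP x = 0 := by simp [hPPdef, hfzero x hxK]
      rw [this, abs_zero]
      have := mul_nonneg (hUnn x) (hVnn x)
      positivity
  -- PP is integrable
  have hPPbd : ∀ x, |PP x| ≤ p * (U x * V x) := hGb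
  have hUVint : Integrable (fun x => U x * V x) := by
    apply (hUc.mul hVc).integrable_of_hasCompactSupport
    apply HasCompactSupport.intro hKc
    intro x hx
    simp [hU0 x hx]
  have hPPi : Integrable PP := by
    apply (hUVint.const_mul p).mono' hPPmeas
    exact Filter.Eventually.of_forall fun x => by
      rw [Real.norm_eq_abs]; exact hGb x
  -- Hölder inequality
  have hconj : Real.HolderConjugate (p / (p - 1)) p := by
    exact ((Real.holderConjugate_iff_eq_conjExponent hp).2 rfl).symm
  have hUmem : MemLp U (ENNReal.ofReal (p / (p - 1))) volume := by
    apply hUc.memLp_of_hasCompactSupport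
    apply HasCompactSupport.intro hKc hU0
  have hVmem : MemLp V (ENNReal.ofReal p) volume := by
    apply hVc.memLp_of_hasCompactSupport
    apply HasCompactSupport.intro hKc hV0
  have hHold := integral_mul_le_Lp_mul_Lq_of_nonneg hconj
    (Filter.Eventually.of_forall hUnn) (Filter.Eventually.of_forall hVnn) hUmem hVmem
  have hUpow : ∀ x, U x ^ (p / (p - 1)) = u x := by
    intro x
    rw [hUdef, ← Real.rpow_mul (hunn x),
      show (p - 1) / p * (p / (p - 1)) = 1 by field_simp, Real.rpow_one]
  have hVpow : ∀ x, V x ^ p = v x := by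
    intro x
    rw [hVdef, ← Real.rpow_mul (hvnn x),
      show 1 / p * p = 1 by field_simp, Real.rpow_one]
  rw [show (∫ x, U x ^ (p / (p - 1))) = ∫ x, u x from by
      congr 1; funext x; exact hUpow x,
    show (∫ x, V x ^ p) = ∫ x, v x from by
      congr 1; funext x; exact hVpow x,
    show 1 / (p / (p - 1)) = (p - 1) / p from one_div_div _ _] at hHold
  -- combine everything
  set I : ℝ := ∫ x, u x with hIdef
  set J : ℝ := ∫ x, v x with hJdef
  have hInn : 0 ≤ I := integral_nonneg hunn
  have hJnn : 0 ≤ J := integral_nonneg hvnn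
  have hchain : (p - 1) * I ≤ p * (I ^ ((p - 1) / p) * J ^ (1 / p)) := by
    rw [hlim]
    calc (∫ x, PP x) ≤ ∫ x, p * (U x * V x) := by
          apply integral_mono hPPi (hUVint.const_mul p)
          intro x
          exact (le_abs_self _).trans (hGb x)
      _ = p * ∫ x, U x * V x := integral_const_mul _ _
      _ ≤ p * (I ^ ((p - 1) / p) * J ^ (1 / p)) := by
          apply mul_le_mul_of_nonneg_left _ hp0.le
          exact hHold
  -- final algebra
  have hfinal : ((p - 1) / p) ^ p * I ≤ J := by
    rcases eq_or_lt_of_le hInn with hI | hI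
    · rw [← hI, mul_zero]; exact hJnn
    · have hIa : 0 < I ^ ((p - 1) / p) := Real.rpow_pos_of_pos hI _
      have hIexp : I ^ ((p - 1) / p) * I ^ (1 / p) = I := by
        have h := (Real.rpow_add hI ((p - 1) / p) (1 / p)).symm
        rw [show (p - 1) / p + 1 / p = 1 by field_simp; ring, Real.rpow_one] at h
        exact h
      have h1 : (p - 1) * I ^ (1 / p) ≤ p * J ^ (1 / p) := by
        have h2 : I ^ ((p - 1) / p) * ((p - 1) * I ^ (1 / p))
            ≤ I ^ ((p - 1) / p) * (p * J ^ (1 / p)) := by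
          calc I ^ ((p - 1) / p) * ((p - 1) * I ^ (1 / p))
              = (p - 1) * (I ^ ((p - 1) / p) * I ^ (1 / p)) := by ring
            _ = (p - 1) * I := by rw [hIexp]
            _ ≤ p * (I ^ ((p - 1) / p) * J ^ (1 / p)) := hchain
            _ = I ^ ((p - 1) / p) * (p * J ^ (1 / p)) := by ring
        exact le_of_mul_le_mul_left h2 hIa
      have h3 : ((p - 1) / p) * I ^ (1 / p) ≤ J ^ (1 / p) := by
        rw [div_mul_eq_mul_div, div_le_iff₀ hp0]
        linarith [h1]
      have h4 := Real.rpow_le_rpow (by positivity) h3 hp0.le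
      have h5 : (((p - 1) / p) * I ^ (1 / p)) ^ p = ((p - 1) / p) ^ p * I := by
        rw [Real.mul_rpow (by positivity) (Real.rpow_nonneg hInn _)]
        · congr 1
          rw [← Real.rpow_mul hInn, show 1 / p * p = 1 by field_simp, Real.rpow_one]
      have h6 : (J ^ (1 / p)) ^ p = J := by
        rw [← Real.rpow_mul hJnn, show 1 / p * p = 1 by field_simp, Real.rpow_one]
      rw [h5, h6] at h4
      exact h4
  -- rewrite the goal
  have hJeq : (∫ x in Ω, ((X1H f x) ^ 2 + (X2H f x) ^ 2) ^ (p / 2)) = J := by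
    apply setIntegral_eq_integral_of_forall_compl_eq_zero
    intro x hx
    exact hv0 x fun h => hx (hfs h)
  have hIeq : (∫ x in Ω,
      ((n 0 + 4 * x 1 * n 2) ^ 2 + (n 1 - 4 * x 0 * n 2) ^ 2) ^ (p / 2)
        / |x 0 * n 0 + x 1 * n 1 + 2 * x 2 * n 2| ^ p * |f x| ^ p) = I := by
    rw [hIdef]
    rw [setIntegral_congr_fun hΩ.measurableSet (g := u) ?_]
    · apply setIntegral_eq_integral_of_forall_compl_eq_zero
      intro x hx
      exact hu0 x fun h => hx (hfs h)
    · intro x hx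
      have hdx := hd_pos x hx
      have habs : |x 0 * n 0 + x 1 * n 1 + 2 * x 2 * n 2| = dZ n x := abs_of_pos hdx
      show ((n 0 + 4 * x 1 * n 2) ^ 2 + (n 1 - 4 * x 0 * n 2) ^ 2) ^ (p / 2)
          / |x 0 * n 0 + x 1 * n 1 + 2 * x 2 * n 2| ^ p * |f x| ^ p = u x
      rw [habs, hudef]
      simp only [qZ, aZ, bZ]
      rw [Real.rpow_neg hdx.le, div_eq_mul_inv]
      ring
  rw [ge_iff_le, hJeq, hIeq]
  exact hfinal
end

section
/- On ℝ³ with the Heisenberg horizontal gradient ∇_H f = (X₁f, X₂f), where X₁f(x) = ∂f/∂x₁ + 2x₂ ∂f/∂x₃ and X₂f(x) = ∂f/∂x₂ − 2x₁ ∂f/∂x₃, let Ω⁺ = {x ∈ ℝ³ : x₃ > 0}. Then for every f ∈ C₀^∞(Ω⁺): ∫_{Ω⁺} |∇_H f(x)|² dx ≥ ∫_{Ω⁺} ((x₁² + x₂²)/x₃²) |f(x)|² dx. -/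
open MeasureTheory Real

open Set Function

noncomputable def e3 (i : Fin 3) : Fin 3 → ℝ := Pi.single i 1

lemma vec_decomp3 (a b c : ℝ) :
    (![a, b, c] : Fin 3 → ℝ) = a • e3 0 + b • e3 1 + c • e3 2 := by
  funext j
  fin_cases j <;> simp [e3]

lemma clm_vec3 (L : (Fin 3 → ℝ) →L[ℝ] ℝ) (a b c : ℝ) :
    L ![a, b, c] = a * L (e3 0) + b * L (e3 1) + c * L (e3 2) := by
  rw [vec_decomp3]
  simp

/-- Divergence-type vanishing integral for compactly supported C¹ families. -/
lemma integral_div3_eq_zero (F : Fin 3 → (Fin 3 → ℝ) → ℝ) (hF : ∀ i, ContDiff ℝ 1 (F i))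
    (K : Set (Fin 3 → ℝ)) (hK : IsCompact K) (hFK : ∀ i, tsupport (F i) ⊆ K) :
    ∫ x : Fin 3 → ℝ, (∑ i, fderiv ℝ (F i) x (e3 i)) = 0 := by
  obtain ⟨R, hR1, hR⟩ : ∃ R : ℝ, 1 ≤ R ∧ ∀ y ∈ K, ‖y‖ < R := by
    obtain ⟨R, hR⟩ := hK.isBounded.subset_closedBall 0
    refine ⟨max R 0 + 1, by simp, fun y hy => ?_⟩
    have h1 := mem_closedBall_zero_iff.1 (hR hy)
    have h2 : R ≤ max R 0 := le_max_left _ _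
    linarith
  set a : Fin 3 → ℝ := fun _ => -R with ha
  set b : Fin 3 → ℝ := fun _ => R with hb
  have hle : a ≤ b := fun i => by simp only [ha, hb]; linarith
  have hface : ∀ (i : Fin 3) (t : ℝ), R ≤ |t| → ∀ y : Fin 2 → ℝ,
      F i (Fin.insertNth i t y) = 0 := by
    intro i t ht y
    apply image_eq_zero_of_notMem_tsupport
    intro hmem
    have h1 := hR _ (hFK i hmem)
    have h2 : |t| ≤ ‖(Fin.insertNth i t y : Fin 3 → ℝ)‖ := by
      simpa using norm_le_pi_norm (Fin.insertNth i t y : Fin 3 → ℝ) i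
    linarith
  have hcont : Continuous fun x => ∑ i : Fin 3, fderiv ℝ (F i) x (e3 i) := by
    apply continuous_finset_sum
    intro i _
    exact ((hF i).continuous_fderiv one_ne_zero).clm_apply continuous_const
  have key := integral_divergence_of_hasFDerivAt_off_countable' a b hle
      F (fun i x => fderiv ℝ (F i) x)
      ∅ countable_empty
      (fun i => ((hF i).continuous).continuousOn)
      (fun x _ i => (((hF i).differentiable one_ne_zero) x).hasFDerivAt)
      (hcont.integrableOn_Icc)
  have hfront : ∀ i : Fin 3, (∫ x in Icc (a ∘ i.succAbove) (b ∘ i.succAbove),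
      F i (i.insertNth (b i) x)) = 0 := by
    intro i
    have : ∀ x : Fin 2 → ℝ, F i (i.insertNth (b i) x) = 0 := fun x =>
      hface i (b i) (by simp [hb]; exact le_abs_self R) x
    simp [this]
  have hback : ∀ i : Fin 3, (∫ x in Icc (a ∘ i.succAbove) (b ∘ i.succAbove),
      F i (i.insertNth (a i) x)) = 0 := by
    intro i
    have : ∀ x : Fin 2 → ℝ, F i (i.insertNth (a i) x) = 0 := fun x =>
      hface i (a i) (by simp [ha, abs_neg]; exact le_abs_self R) x
    simp [this]
  simp only [hfront, hback, sub_zero, Finset.sum_const_zero] at key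
  have hzero_off : ∀ x : Fin 3 → ℝ, x ∉ Icc a b →
      (∑ i : Fin 3, fderiv ℝ (F i) x (Pi.single i 1)) = 0 := by
    intro x hx
    have hxK : x ∉ K := by
      intro hxK
      apply hx
      have hn := hR x hxK
      constructor
      · intro i
        have h1 := norm_le_pi_norm x i
        simp only [Real.norm_eq_abs] at h1
        have h2 : |x i| < R := lt_of_le_of_lt h1 hn
        have h3 := abs_lt.1 h2
        simp only [ha]
        linarith [h3.1]
      · intro i
        have h1 := norm_le_pi_norm x i
        simp only [Real.norm_eq_abs] at h1
        have h2 : |x i| < R := lt_of_le_of_lt h1 hn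
        have h3 := abs_lt.1 h2
        simp only [hb]
        linarith [h3.2]
    refine Finset.sum_eq_zero fun i _ => ?_
    have hz : fderiv ℝ (F i) x = 0 := by
      by_contra h
      exact hxK (hFK i (support_fderiv_subset ℝ (f := F i) h))
    simp [hz]
  have := setIntegral_eq_integral_of_forall_compl_eq_zero (μ := volume) (s := Icc a b)
      (f := fun x => ∑ i : Fin 3, fderiv ℝ (F i) x (Pi.single i 1)) hzero_off
  simp only [e3]
  rw [← this]
  exact key

lemma q_hasFDerivAt (f : (Fin 3 → ℝ) → ℝ) (hf : ContDiff ℝ (⊤:ℕ∞) f) (c : ℝ) (j : Fin 3)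
    {x : Fin 3 → ℝ} (hx : x 2 ≠ 0) :
    HasFDerivAt (fun y => f y * f y * (c * y j * (y 2)⁻¹))
      ((f x * f x) • ((c * x j) • ((-((x 2) ^ 2)⁻¹) •
            (ContinuousLinearMap.proj 2 : (Fin 3 → ℝ) →L[ℝ] ℝ))
          + (x 2)⁻¹ • (c • (ContinuousLinearMap.proj j : (Fin 3 → ℝ) →L[ℝ] ℝ)))
        + (c * x j * (x 2)⁻¹) • (f x • fderiv ℝ f x + f x • fderiv ℝ f x)) x := by
  have hfd : HasFDerivAt f (fderiv ℝ f x) x := ((hf.differentiable (by norm_num)) x).hasFDerivAt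
  have h1 : HasFDerivAt (fun y : Fin 3 → ℝ => c * y j)
      (c • (ContinuousLinearMap.proj j : (Fin 3 → ℝ) →L[ℝ] ℝ)) x :=
    ((ContinuousLinearMap.proj j : (Fin 3 → ℝ) →L[ℝ] ℝ).hasFDerivAt).const_mul c
  have h2 : HasFDerivAt (fun y : Fin 3 → ℝ => (y 2)⁻¹)
      ((-((x 2) ^ 2)⁻¹) • (ContinuousLinearMap.proj 2 : (Fin 3 → ℝ) →L[ℝ] ℝ)) x :=
    (hasDerivAt_inv hx).comp_hasFDerivAt x
      (ContinuousLinearMap.proj 2 : (Fin 3 → ℝ) →L[ℝ] ℝ).hasFDerivAt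
  exact (hfd.mul hfd).mul (h1.mul h2)

lemma q_fderiv_apply (f : (Fin 3 → ℝ) → ℝ) (hf : ContDiff ℝ (⊤:ℕ∞) f) (c : ℝ) (j : Fin 3)
    {x : Fin 3 → ℝ} (hx : x 2 ≠ 0) (v : Fin 3 → ℝ) :
    fderiv ℝ (fun y => f y * f y * (c * y j * (y 2)⁻¹)) x v
      = (f x * f x) * ((c * x j) * (-((x 2) ^ 2)⁻¹ * v 2) + (x 2)⁻¹ * (c * v j))
        + (c * x j * (x 2)⁻¹) * (2 * f x * fderiv ℝ f x v) := by
  rw [(q_hasFDerivAt f hf c j hx).fderiv]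
  simp only [ContinuousLinearMap.add_apply, ContinuousLinearMap.smul_apply,
    ContinuousLinearMap.coe_smul', Pi.smul_apply, ContinuousLinearMap.proj_apply, smul_eq_mul]
  ring

lemma q_contDiff (f : (Fin 3 → ℝ) → ℝ) (hf : ContDiff ℝ (⊤:ℕ∞) f) {ε : ℝ} (hε : 0 < ε)
    (hsupp : ∀ x ∈ tsupport f, ε ≤ x 2) (c : ℝ) (j : Fin 3) :
    ContDiff ℝ 1 (fun x => f x * f x * (c * x j * (x 2)⁻¹)) := by
  rw [contDiff_iff_contDiffAt]
  intro x
  by_cases hx : x 2 ≠ 0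
  · have hf1 : ContDiffAt ℝ 1 f x := (hf.of_le (by exact_mod_cast le_top)).contDiffAt
    have hj : ContDiffAt ℝ 1 (fun y : Fin 3 → ℝ => y j) x :=
      (ContinuousLinearMap.proj j : (Fin 3 → ℝ) →L[ℝ] ℝ).contDiff.contDiffAt
    have h2 : ContDiffAt ℝ 1 (fun y : Fin 3 → ℝ => y 2) x :=
      (ContinuousLinearMap.proj 2 : (Fin 3 → ℝ) →L[ℝ] ℝ).contDiff.contDiffAt
    exact (hf1.mul hf1).mul ((contDiffAt_const.mul hj).mul (h2.inv hx))
  · push_neg at hx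
    have hU : {y : Fin 3 → ℝ | y 2 < ε} ∈ nhds x :=
      (isOpen_lt (continuous_apply 2) continuous_const).mem_nhds (by simp [hx, hε])
    have hEq : (fun y : Fin 3 → ℝ => f y * f y * (c * y j * (y 2)⁻¹))
        =ᶠ[nhds x] (fun _ => 0) := by
      filter_upwards [hU] with y hy
      have hy0 : f y = 0 := by
        apply image_eq_zero_of_notMem_tsupport
        intro hmem
        exact absurd (hsupp y hmem) (not_le.2 hy)
      simp [hy0]
    exact (contDiffAt_const (c := (0:ℝ))).congr_of_eventuallyEq hEq

lemma q_tsupport (f : (Fin 3 → ℝ) → ℝ) (c : ℝ) (j : Fin 3) :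
    tsupport (fun x => f x * f x * (c * x j * (x 2)⁻¹)) ⊆ tsupport f := by
  apply closure_mono
  intro x hx
  simp only [Function.mem_support] at hx ⊢
  intro h0
  apply hx
  simp [h0]

/-- the L² Hardy inequality on the half-space `{x₃ > 0}` of the
Heisenberg group (Luan–Young). -/
theorem stmt_4
    (f : (Fin 3 → ℝ) → ℝ)
    (hf : ContDiff ℝ (⊤ : ℕ∞) f) (hfc : HasCompactSupport f)
    (hfs : tsupport f ⊆ {x : Fin 3 → ℝ | x 2 > 0}) :
    ∫ x in {x : Fin 3 → ℝ | x 2 > 0}, ((X1H f x) ^ 2 + (X2H f x) ^ 2) ≥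
      ∫ x in {x : Fin 3 → ℝ | x 2 > 0},
        ((x 0) ^ 2 + (x 1) ^ 2) / (x 2) ^ 2 * |f x| ^ 2 := by
  classical
  obtain ⟨ε, hε, hεle⟩ : ∃ ε > 0, ∀ x ∈ tsupport f, ε ≤ x 2 := by
    rcases eq_empty_or_nonempty (tsupport f) with h | h
    · exact ⟨1, one_pos, fun x hx => absurd hx (by simp [h])⟩
    · obtain ⟨x₀, hx₀, hmin⟩ :=
        (hfc : IsCompact (tsupport f)).exists_isMinOn h (continuous_apply 2).continuousOn
      exact ⟨x₀ 2, hfs hx₀, fun x hx => hmin hx⟩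
  have hdf0 : ∀ x : Fin 3 → ℝ, x ∉ tsupport f → fderiv ℝ f x = 0 := by
    intro x hx
    by_contra h
    exact hx (support_fderiv_subset ℝ (f := f) h)
  have hf0 : ∀ x : Fin 3 → ℝ, x ∉ tsupport f → f x = 0 := fun x hx =>
    image_eq_zero_of_notMem_tsupport hx
  have hout : ∀ x : Fin 3 → ℝ, x 2 ≤ 0 → x ∉ tsupport f := by
    intro x hx hmem
    linarith [hεle x hmem]
  have hg1d : ContDiff ℝ 1 (fun y : Fin 3 → ℝ => f y * f y * (1 * y 1 * (y 2)⁻¹)) :=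
    q_contDiff f hf hε hεle 1 1
  have hg2d : ContDiff ℝ 1 (fun y : Fin 3 → ℝ => f y * f y * (-1 * y 0 * (y 2)⁻¹)) :=
    q_contDiff f hf hε hεle (-1) 0
  have hg1s := q_tsupport f 1 1
  have hg2s := q_tsupport f (-1) 0
  have hdg1 : ∀ x : Fin 3 → ℝ, x ∉ tsupport f →
      fderiv ℝ (fun y : Fin 3 → ℝ => f y * f y * (1 * y 1 * (y 2)⁻¹)) x = 0 := by
    intro x hx
    by_contra h
    exact hx (hg1s (support_fderiv_subset ℝ h))
  have hdg2 : ∀ x : Fin 3 → ℝ, x ∉ tsupport f →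
      fderiv ℝ (fun y : Fin 3 → ℝ => f y * f y * (-1 * y 0 * (y 2)⁻¹)) x = 0 := by
    intro x hx
    by_contra h
    exact hx (hg2s (support_fderiv_subset ℝ h))
  -- formulas for the horizontal derivatives of the auxiliary functions on `x 2 ≠ 0`
  have e1 : ∀ x : Fin 3 → ℝ, x 2 ≠ 0 →
      X1H (fun y : Fin 3 → ℝ => f y * f y * (1 * y 1 * (y 2)⁻¹)) x
        = (x 1 * (x 2)⁻¹) * (2 * f x * X1H f x)
          - 2 * (f x * f x) * (x 1 * x 1) * ((x 2) ^ 2)⁻¹ := by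
    intro x hx
    simp only [X1H]
    rw [q_fderiv_apply f hf 1 1 hx]
    simp only [Matrix.cons_val_one, Matrix.head_cons, Matrix.cons_val_two, Matrix.tail_cons,
      Matrix.cons_val_zero]
    ring
  have e2 : ∀ x : Fin 3 → ℝ, x 2 ≠ 0 →
      X2H (fun y : Fin 3 → ℝ => f y * f y * (-1 * y 0 * (y 2)⁻¹)) x
        = (-(x 0) * (x 2)⁻¹) * (2 * f x * X2H f x)
          - 2 * (f x * f x) * (x 0 * x 0) * ((x 2) ^ 2)⁻¹ := by
    intro x hx
    simp only [X2H]
    rw [q_fderiv_apply f hf (-1) 0 hx]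
    simp only [Matrix.cons_val_one, Matrix.head_cons, Matrix.cons_val_two, Matrix.tail_cons,
      Matrix.cons_val_zero]
    ring
  -- the pointwise inequality
  have hP : ∀ x : Fin 3 → ℝ,
      (X1H (fun y : Fin 3 → ℝ => f y * f y * (1 * y 1 * (y 2)⁻¹)) x
        + X2H (fun y : Fin 3 → ℝ => f y * f y * (-1 * y 0 * (y 2)⁻¹)) x)
        + ((x 0) ^ 2 + (x 1) ^ 2) * ((x 2) ^ 2)⁻¹ * (f x * f x)
      ≤ (X1H f x) ^ 2 + (X2H f x) ^ 2 := by
    intro x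
    by_cases hx : 0 < x 2
    · have hx' : x 2 ≠ 0 := ne_of_gt hx
      rw [e1 x hx', e2 x hx']
      have ht : ((x 2) ^ 2)⁻¹ = ((x 2)⁻¹) ^ 2 := (inv_pow (x 2) 2).symm
      rw [ht]
      nlinarith [sq_nonneg (X1H f x - f x * (x 1 * (x 2)⁻¹)),
        sq_nonneg (X2H f x + f x * (x 0 * (x 2)⁻¹))]
    · push_neg at hx
      have hns := hout x hx
      simp only [X1H, X2H, hdg1 x hns, hdg2 x hns, hdf0 x hns, hf0 x hns,
        ContinuousLinearMap.zero_apply]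
      norm_num
  -- divergence identity
  have hF2d : ContDiff ℝ 1 (fun y : Fin 3 → ℝ =>
      2 * y 1 * (f y * f y * (1 * y 1 * (y 2)⁻¹))
        + -2 * y 0 * (f y * f y * (-1 * y 0 * (y 2)⁻¹))) := by
    have c1 : ContDiff ℝ 1 (fun y : Fin 3 → ℝ => 2 * y 1) :=
      contDiff_const.mul (ContinuousLinearMap.proj 1 : (Fin 3 → ℝ) →L[ℝ] ℝ).contDiff
    have c0 : ContDiff ℝ 1 (fun y : Fin 3 → ℝ => -2 * y 0) :=
      contDiff_const.mul (ContinuousLinearMap.proj 0 : (Fin 3 → ℝ) →L[ℝ] ℝ).contDiff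
    exact (c1.mul hg1d).add (c0.mul hg2d)
  have hF2s : tsupport (fun y : Fin 3 → ℝ =>
      2 * y 1 * (f y * f y * (1 * y 1 * (y 2)⁻¹))
        + -2 * y 0 * (f y * f y * (-1 * y 0 * (y 2)⁻¹))) ⊆ tsupport f := by
    apply closure_mono
    intro x hx
    simp only [Function.mem_support] at hx ⊢
    intro h0
    apply hx
    simp [h0]
  have hDeq : ∀ x : Fin 3 → ℝ,
      X1H (fun y : Fin 3 → ℝ => f y * f y * (1 * y 1 * (y 2)⁻¹)) x
        + X2H (fun y : Fin 3 → ℝ => f y * f y * (-1 * y 0 * (y 2)⁻¹)) x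
      = ∑ i : Fin 3, fderiv ℝ
          ((![fun y : Fin 3 → ℝ => f y * f y * (1 * y 1 * (y 2)⁻¹),
              fun y : Fin 3 → ℝ => f y * f y * (-1 * y 0 * (y 2)⁻¹),
              fun y : Fin 3 → ℝ => 2 * y 1 * (f y * f y * (1 * y 1 * (y 2)⁻¹))
                + -2 * y 0 * (f y * f y * (-1 * y 0 * (y 2)⁻¹))] :
            Fin 3 → (Fin 3 → ℝ) → ℝ) i) x (e3 i) := by
    intro x
    have h1 : HasFDerivAt (fun y : Fin 3 → ℝ => 2 * y 1 * (f y * f y * (1 * y 1 * (y 2)⁻¹)))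
        ((2 * x 1) • fderiv ℝ (fun y : Fin 3 → ℝ => f y * f y * (1 * y 1 * (y 2)⁻¹)) x
          + (f x * f x * (1 * x 1 * (x 2)⁻¹)) •
            ((2:ℝ) • (ContinuousLinearMap.proj 1 : (Fin 3 → ℝ) →L[ℝ] ℝ))) x :=
      (((ContinuousLinearMap.proj 1 : (Fin 3 → ℝ) →L[ℝ] ℝ).hasFDerivAt).const_mul 2).mul
        ((hg1d.differentiable one_ne_zero x).hasFDerivAt)
    have h2 : HasFDerivAt (fun y : Fin 3 → ℝ => -2 * y 0 * (f y * f y * (-1 * y 0 * (y 2)⁻¹)))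
        ((-2 * x 0) • fderiv ℝ (fun y : Fin 3 → ℝ => f y * f y * (-1 * y 0 * (y 2)⁻¹)) x
          + (f x * f x * (-1 * x 0 * (x 2)⁻¹)) •
            ((-2:ℝ) • (ContinuousLinearMap.proj 0 : (Fin 3 → ℝ) →L[ℝ] ℝ))) x :=
      (((ContinuousLinearMap.proj 0 : (Fin 3 → ℝ) →L[ℝ] ℝ).hasFDerivAt).const_mul (-2)).mul
        ((hg2d.differentiable one_ne_zero x).hasFDerivAt)
    have hfd2 : fderiv ℝ (fun y : Fin 3 → ℝ =>
        2 * y 1 * (f y * f y * (1 * y 1 * (y 2)⁻¹))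
          + -2 * y 0 * (f y * f y * (-1 * y 0 * (y 2)⁻¹))) x
        = ((2 * x 1) • fderiv ℝ (fun y : Fin 3 → ℝ => f y * f y * (1 * y 1 * (y 2)⁻¹)) x
          + (f x * f x * (1 * x 1 * (x 2)⁻¹)) •
            ((2:ℝ) • (ContinuousLinearMap.proj 1 : (Fin 3 → ℝ) →L[ℝ] ℝ)))
          + ((-2 * x 0) • fderiv ℝ (fun y : Fin 3 → ℝ => f y * f y * (-1 * y 0 * (y 2)⁻¹)) x
          + (f x * f x * (-1 * x 0 * (x 2)⁻¹)) •
            ((-2:ℝ) • (ContinuousLinearMap.proj 0 : (Fin 3 → ℝ) →L[ℝ] ℝ))) :=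
      (h1.add h2).fderiv
    rw [Fin.sum_univ_three]
    simp only [Matrix.cons_val_zero, Matrix.cons_val_one, Matrix.head_cons, Matrix.cons_val_two,
      Matrix.tail_cons]
    rw [hfd2]
    simp only [X1H, X2H]
    rw [clm_vec3 (fderiv ℝ (fun y : Fin 3 → ℝ => f y * f y * (1 * y 1 * (y 2)⁻¹)) x) 1 0 (2 * x 1),
      clm_vec3 (fderiv ℝ (fun y : Fin 3 → ℝ => f y * f y * (-1 * y 0 * (y 2)⁻¹)) x) 0 1 (-2 * x 0)]
    simp only [ContinuousLinearMap.add_apply, ContinuousLinearMap.smul_apply, smul_eq_mul,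
      ContinuousLinearMap.proj_apply, e3]
    simp only [Pi.single_apply]
    simp only [if_neg (by decide : ¬(1:Fin 3) = 2), if_neg (by decide : ¬(0:Fin 3) = 2),
      if_pos (rfl : (0:Fin 3) = 0), if_pos (rfl : (1:Fin 3) = 1), if_pos (rfl : (2:Fin 3) = 2)]
    norm_num
    ring
  -- vanishing of the divergence integral
  have hDzero : ∫ x : Fin 3 → ℝ,
      (X1H (fun y : Fin 3 → ℝ => f y * f y * (1 * y 1 * (y 2)⁻¹)) x
        + X2H (fun y : Fin 3 → ℝ => f y * f y * (-1 * y 0 * (y 2)⁻¹)) x) = 0 := by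
    have hFd : ∀ i : Fin 3, ContDiff ℝ 1
        ((![fun y : Fin 3 → ℝ => f y * f y * (1 * y 1 * (y 2)⁻¹),
            fun y : Fin 3 → ℝ => f y * f y * (-1 * y 0 * (y 2)⁻¹),
            fun y : Fin 3 → ℝ => 2 * y 1 * (f y * f y * (1 * y 1 * (y 2)⁻¹))
              + -2 * y 0 * (f y * f y * (-1 * y 0 * (y 2)⁻¹))] :
          Fin 3 → (Fin 3 → ℝ) → ℝ) i) := by
      intro i
      fin_cases i
      · exact hg1d
      · exact hg2d
      · exact hF2d
    have hFs : ∀ i : Fin 3, tsupport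
        ((![fun y : Fin 3 → ℝ => f y * f y * (1 * y 1 * (y 2)⁻¹),
            fun y : Fin 3 → ℝ => f y * f y * (-1 * y 0 * (y 2)⁻¹),
            fun y : Fin 3 → ℝ => 2 * y 1 * (f y * f y * (1 * y 1 * (y 2)⁻¹))
              + -2 * y 0 * (f y * f y * (-1 * y 0 * (y 2)⁻¹))] :
          Fin 3 → (Fin 3 → ℝ) → ℝ) i) ⊆ tsupport f := by
      intro i
      fin_cases i
      · exact hg1s
      · exact hg2s
      · exact hF2s
    calc ∫ x : Fin 3 → ℝ,
        (X1H (fun y : Fin 3 → ℝ => f y * f y * (1 * y 1 * (y 2)⁻¹)) x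
          + X2H (fun y : Fin 3 → ℝ => f y * f y * (-1 * y 0 * (y 2)⁻¹)) x)
        = ∫ x : Fin 3 → ℝ, ∑ i : Fin 3, fderiv ℝ
            ((![fun y : Fin 3 → ℝ => f y * f y * (1 * y 1 * (y 2)⁻¹),
                fun y : Fin 3 → ℝ => f y * f y * (-1 * y 0 * (y 2)⁻¹),
                fun y : Fin 3 → ℝ => 2 * y 1 * (f y * f y * (1 * y 1 * (y 2)⁻¹))
                  + -2 * y 0 * (f y * f y * (-1 * y 0 * (y 2)⁻¹))] :
              Fin 3 → (Fin 3 → ℝ) → ℝ) i) x (e3 i) := by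
          simp only [hDeq]
      _ = 0 := integral_div3_eq_zero _ hFd (tsupport f) hfc hFs
  -- continuity and integrability
  have hvc1 : Continuous fun x : Fin 3 → ℝ => (![1, 0, 2 * x 1] : Fin 3 → ℝ) := by
    refine continuous_pi fun i => ?_
    fin_cases i
    · exact continuous_const
    · exact continuous_const
    · exact continuous_const.mul (continuous_apply 1)
  have hvc2 : Continuous fun x : Fin 3 → ℝ => (![0, 1, -2 * x 0] : Fin 3 → ℝ) := by
    refine continuous_pi fun i => ?_
    fin_cases i
    · exact continuous_const
    · exact continuous_const
    · exact continuous_const.mul (continuous_apply 0)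
  have cX1f : Continuous (X1H f) := by
    show Continuous fun x : Fin 3 → ℝ => fderiv ℝ f x ![1, 0, 2 * x 1]
    exact (hf.continuous_fderiv (by simp)).clm_apply hvc1
  have cX2f : Continuous (X2H f) := by
    show Continuous fun x : Fin 3 → ℝ => fderiv ℝ f x ![0, 1, -2 * x 0]
    exact (hf.continuous_fderiv (by simp)).clm_apply hvc2
  have intA : Integrable (fun x : Fin 3 → ℝ => (X1H f x) ^ 2 + (X2H f x) ^ 2) := by
    refine ((cX1f.pow 2).add (cX2f.pow 2)).integrable_of_hasCompactSupport ?_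
    refine HasCompactSupport.intro (hfc : IsCompact (tsupport f)) fun x hx => ?_
    simp only [Pi.add_apply, Pi.pow_apply, X1H, X2H, hdf0 x hx, ContinuousLinearMap.zero_apply]
    norm_num
  have intD : Integrable (fun x : Fin 3 → ℝ =>
      X1H (fun y : Fin 3 → ℝ => f y * f y * (1 * y 1 * (y 2)⁻¹)) x
        + X2H (fun y : Fin 3 → ℝ => f y * f y * (-1 * y 0 * (y 2)⁻¹)) x) := by
    have c1 : Continuous (X1H (fun y : Fin 3 → ℝ => f y * f y * (1 * y 1 * (y 2)⁻¹))) := by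
      show Continuous fun x : Fin 3 → ℝ =>
        fderiv ℝ (fun y : Fin 3 → ℝ => f y * f y * (1 * y 1 * (y 2)⁻¹)) x ![1, 0, 2 * x 1]
      exact (hg1d.continuous_fderiv one_ne_zero).clm_apply hvc1
    have c2 : Continuous (X2H (fun y : Fin 3 → ℝ => f y * f y * (-1 * y 0 * (y 2)⁻¹))) := by
      show Continuous fun x : Fin 3 → ℝ =>
        fderiv ℝ (fun y : Fin 3 → ℝ => f y * f y * (-1 * y 0 * (y 2)⁻¹)) x ![0, 1, -2 * x 0]
      exact (hg2d.continuous_fderiv one_ne_zero).clm_apply hvc2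
    refine (c1.add c2).integrable_of_hasCompactSupport ?_
    refine HasCompactSupport.intro (hfc : IsCompact (tsupport f)) fun x hx => ?_
    simp only [Pi.add_apply, X1H, X2H, hdg1 x hx, hdg2 x hx, ContinuousLinearMap.zero_apply]
    norm_num
  have intB : Integrable (fun x : Fin 3 → ℝ =>
      ((x 0) ^ 2 + (x 1) ^ 2) * ((x 2) ^ 2)⁻¹ * (f x * f x)) := by
    have cB : Continuous fun x : Fin 3 → ℝ =>
        ((x 0) ^ 2 + (x 1) ^ 2) * ((x 2) ^ 2)⁻¹ * (f x * f x) := by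
      rw [continuous_iff_continuousAt]
      intro x
      by_cases hx : x 2 ≠ 0
      · have h2 : ContinuousAt (fun y : Fin 3 → ℝ => ((y 2) ^ 2)⁻¹) x :=
          (((continuous_apply 2).pow 2).continuousAt).inv₀ (pow_ne_zero 2 hx)
        exact ((((continuous_apply 0).pow 2).add
          ((continuous_apply 1).pow 2)).continuousAt.mul h2).mul
          ((hf.continuous.mul hf.continuous).continuousAt)
      · push_neg at hx
        have hU : {y : Fin 3 → ℝ | y 2 < ε} ∈ nhds x :=
          (isOpen_lt (continuous_apply 2) continuous_const).mem_nhds (by simp [hx, hε])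
        have hEq : (fun y : Fin 3 → ℝ => ((y 0) ^ 2 + (y 1) ^ 2) * ((y 2) ^ 2)⁻¹ * (f y * f y))
            =ᶠ[nhds x] fun _ => (0:ℝ) := by
          filter_upwards [hU] with y hy
          have hy0 : f y = 0 := hf0 y (fun hmem => absurd (hεle y hmem) (not_le.2 hy))
          simp [hy0]
        exact ContinuousAt.congr continuousAt_const hEq.symm
    refine cB.integrable_of_hasCompactSupport ?_
    refine HasCompactSupport.intro (hfc : IsCompact (tsupport f)) fun x hx => ?_
    rw [hf0 x hx]
    ring
  -- final assembly
  have hAoff : ∀ x : Fin 3 → ℝ, x ∉ {x : Fin 3 → ℝ | x 2 > 0} →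
      (X1H f x) ^ 2 + (X2H f x) ^ 2 = 0 := by
    intro x hx
    have hns := hout x (not_lt.1 hx)
    simp only [X1H, X2H, hdf0 x hns, ContinuousLinearMap.zero_apply]
    norm_num
  have hBoff : ∀ x : Fin 3 → ℝ, x ∉ {x : Fin 3 → ℝ | x 2 > 0} →
      ((x 0) ^ 2 + (x 1) ^ 2) * ((x 2) ^ 2)⁻¹ * (f x * f x) = 0 := by
    intro x hx
    rw [hf0 x (hout x (not_lt.1 hx))]
    ring
  have hBeq : ∀ x : Fin 3 → ℝ, ((x 0) ^ 2 + (x 1) ^ 2) / (x 2) ^ 2 * |f x| ^ 2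
      = ((x 0) ^ 2 + (x 1) ^ 2) * ((x 2) ^ 2)⁻¹ * (f x * f x) := by
    intro x
    rw [div_eq_mul_inv, sq_abs]
    ring
  rw [ge_iff_le]
  calc ∫ x in {x : Fin 3 → ℝ | x 2 > 0}, ((x 0) ^ 2 + (x 1) ^ 2) / (x 2) ^ 2 * |f x| ^ 2
      = ∫ x in {x : Fin 3 → ℝ | x 2 > 0},
          ((x 0) ^ 2 + (x 1) ^ 2) * ((x 2) ^ 2)⁻¹ * (f x * f x) := by
        simp only [hBeq]
    _ = ∫ x : Fin 3 → ℝ, ((x 0) ^ 2 + (x 1) ^ 2) * ((x 2) ^ 2)⁻¹ * (f x * f x) :=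
        setIntegral_eq_integral_of_forall_compl_eq_zero hBoff
    _ = (∫ x : Fin 3 → ℝ,
          (X1H (fun y : Fin 3 → ℝ => f y * f y * (1 * y 1 * (y 2)⁻¹)) x
            + X2H (fun y : Fin 3 → ℝ => f y * f y * (-1 * y 0 * (y 2)⁻¹)) x))
        + ∫ x : Fin 3 → ℝ, ((x 0) ^ 2 + (x 1) ^ 2) * ((x 2) ^ 2)⁻¹ * (f x * f x) := by
        rw [hDzero, zero_add]
    _ = ∫ x : Fin 3 → ℝ,
          ((X1H (fun y : Fin 3 → ℝ => f y * f y * (1 * y 1 * (y 2)⁻¹)) x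
            + X2H (fun y : Fin 3 → ℝ => f y * f y * (-1 * y 0 * (y 2)⁻¹)) x)
          + ((x 0) ^ 2 + (x 1) ^ 2) * ((x 2) ^ 2)⁻¹ * (f x * f x)) :=
        (integral_add intD intB).symm
    _ ≤ ∫ x : Fin 3 → ℝ, ((X1H f x) ^ 2 + (X2H f x) ^ 2) :=
        integral_mono (intD.add intB) intA hP
    _ = ∫ x in {x : Fin 3 → ℝ | x 2 > 0}, ((X1H f x) ^ 2 + (X2H f x) ^ 2) :=
        (setIntegral_eq_integral_of_forall_compl_eq_zero hAoff).symm
end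

section
/- On ℝ² with the Grushin gradient ∇_X f = (∂f/∂x₁, x₁ ∂f/∂x₂), let d ∈ ℝ and Ω⁺ = {x ∈ ℝ² : x₁ > d}. Then for every p > 1 and every f ∈ C₀^∞(Ω⁺): ∫_{Ω⁺} |∇_X f(x)|^p dx ≥ ((p−1)/p)^p ∫_{Ω⁺} ( |f(x)|^p / |x₁ − d|^p ) dx. -/
open MeasureTheory Real

/-- The Grushin vector field `X₁ f = ∂f/∂x₁` on `ℝ²`. -/
noncomputable def X1G (f : (Fin 2 → ℝ) → ℝ) (x : Fin 2 → ℝ) : ℝ :=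
  fderiv ℝ f x ![1, 0]

/-- The Grushin vector field `X₂ f = x₁ ∂f/∂x₂` on `ℝ²`. -/
noncomputable def X2G (f : (Fin 2 → ℝ) → ℝ) (x : Fin 2 → ℝ) : ℝ :=
  fderiv ℝ f x ![0, x 0]

section HardyAux

open Filter Asymptotics


lemma continuous_signedPow {p : ℝ} (hp : 1 < p) :
    Continuous (fun s : ℝ => |s| ^ (p - 2) * s) := by
  rw [continuous_iff_continuousAt]
  intro s
  rcases eq_or_ne s 0 with rfl | hs
  · have hb : Tendsto (fun s : ℝ => |s| ^ (p - 1)) (nhds 0) (nhds 0) := by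
      have : ContinuousAt (fun s : ℝ => |s| ^ (p - 1)) 0 :=
        (continuous_abs.continuousAt).rpow_const (Or.inr (by linarith))
      simpa [Real.zero_rpow (by linarith : p - 1 ≠ 0)] using this.tendsto
    have h0 : Tendsto (fun s : ℝ => |s| ^ (p - 2) * s) (nhds 0) (nhds 0) := by
      apply squeeze_zero_norm _ hb
      intro t
      rcases eq_or_ne t 0 with rfl | ht
      · simp [Real.zero_rpow (by linarith : p - 1 ≠ 0)]
      · have : |t| ^ (p - 1) = |t| ^ (p - 2) * |t| := by
          rw [show p - 1 = (p - 2) + 1 by ring, Real.rpow_add_one (abs_ne_zero.2 ht)]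
        rw [norm_mul, Real.norm_rpow_of_nonneg (abs_nonneg t), this]
        simp [abs_abs]
    simpa [ContinuousAt] using h0
  · exact ((continuous_abs.continuousAt).rpow_const (Or.inl (abs_ne_zero.2 hs))).mul
      continuousAt_id

lemma hasDerivAt_abs_rpow_comp {p : ℝ} (hp : 1 < p) {g : ℝ → ℝ} {g' t : ℝ}
    (hg : HasDerivAt g g' t) :
    HasDerivAt (fun s => |g s| ^ p) (p * (|g t| ^ (p - 2) * g t) * g' ) t := by
  have := (hasDerivAt_abs_rpow (g t) hp).comp t hg
  exact this.congr_deriv (by ring)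

lemma abs_signedPow {p : ℝ} (hp : 1 < p) (s : ℝ) : |(|s| ^ (p - 2) * s)| = |s| ^ (p - 1) := by
  rcases eq_or_ne s 0 with rfl | hs
  · simp [Real.zero_rpow (by linarith : p - 1 ≠ 0)]
  · rw [abs_mul, abs_of_nonneg (Real.rpow_nonneg (abs_nonneg s) _),
      show p - 1 = (p - 2) + 1 by ring, Real.rpow_add_one (abs_ne_zero.2 hs)]

set_option maxHeartbeats 1000000 in
lemma hardy1D {p : ℝ} (hp : 1 < p) {d δ : ℝ} (hδ : 0 < δ) {g : ℝ → ℝ}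
    (hg : ContDiff ℝ (⊤ : ℕ∞) g) (hgc : HasCompactSupport g)
    (hgs : tsupport g ⊆ Set.Ici (d + δ)) :
    ((p - 1) / p) ^ p * ∫ t : ℝ, |g t| ^ p / |t - d| ^ p ≤ ∫ t : ℝ, |deriv g t| ^ p := by
  have hp0 : (0:ℝ) < p := by linarith
  have hp1 : (0:ℝ) < p - 1 := by linarith
  have hg'cont : Continuous (deriv g) := hg.continuous_deriv (mod_cast le_top)
  have hgd : ∀ t, HasDerivAt g (deriv g t) t := fun t => (hg.differentiable (by simp) t).hasDerivAt
  have hg0 : ∀ t ∉ tsupport g, g t = 0 := fun t ht => image_eq_zero_of_notMem_tsupport ht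
  have hg'0 : ∀ t ∉ tsupport g, deriv g t = 0 := by
    intro t ht
    by_contra h
    exact ht (support_deriv_subset (Function.mem_support.2 h))
  -- bound the support
  obtain ⟨r, hr⟩ := hgc.isBounded.subset_closedBall 0
  set b : ℝ := max r (d + δ) with hbdef
  have hsupp : tsupport g ⊆ Set.Icc (d + δ) b := by
    intro t ht
    refine ⟨hgs ht, ?_⟩
    have := hr ht
    rw [Metric.mem_closedBall, Real.dist_eq, sub_zero] at this
    exact le_trans (le_trans (le_abs_self t) this) (le_max_left _ _)
  set a : ℝ := d + δ / 2 with hadef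
  set b' : ℝ := b + 1 with hb'def
  have hda : d < a := by simp [hadef]; linarith
  have hab : a < d + δ := by simp [hadef]; linarith
  have hbb' : b < b' := by simp [hb'def]
  have hab' : a ≤ b' := by
    have : d + δ ≤ b := le_max_right _ _
    linarith
  have hsupp' : tsupport g ⊆ Set.Ioc a b' := fun t ht =>
    ⟨lt_of_lt_of_le hab (hsupp ht).1, le_trans (hsupp ht).2 (by linarith)⟩
  have hpos : ∀ t ∈ Set.uIcc a b', 0 < t - d := by
    intro t ht
    rw [Set.uIcc_of_le hab'] at ht
    have := ht.1
    simp only [hadef] at this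
    linarith
  -- functions
  set u : ℝ → ℝ := fun t => |g t| ^ p with hudef
  set u' : ℝ → ℝ := fun t => p * (|g t| ^ (p - 2) * g t) * deriv g t with hu'def
  have hu : ∀ t, HasDerivAt u (u' t) t := fun t => hasDerivAt_abs_rpow_comp hp (hgd t)
  have hucont : Continuous u :=
    (continuous_abs.comp hg.continuous).rpow_const (fun x => Or.inr hp0.le)
  have hu'cont : Continuous u' :=
    (continuous_const.mul ((continuous_signedPow hp).comp hg.continuous)).mul hg'cont
  set aI : ℝ → ℝ := fun t => |g t| ^ p / |t - d| ^ p with haIdef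
  set bI : ℝ → ℝ := fun t => |deriv g t| ^ p with hbIdef
  set cI : ℝ → ℝ := fun t => |g t| ^ (p - 1) * |deriv g t| / |t - d| ^ (p - 1) with hcIdef
  -- zero values
  have hgz : ∀ t : ℝ, t < d + δ → g t = 0 := by
    intro t ht
    refine hg0 t fun hmem => ?_
    have := hgs hmem
    rw [Set.mem_Ici] at this
    linarith
  have hg'z : ∀ t : ℝ, t < d + δ → deriv g t = 0 := by
    intro t ht
    refine hg'0 t fun hmem => ?_
    have := hgs hmem
    rw [Set.mem_Ici] at this
    linarith
  -- supports of global integrands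
  have haIsupp : Function.support aI ⊆ Set.Ioc a b' := by
    intro t ht
    rw [Function.mem_support] at ht
    refine hsupp' ?_
    apply subset_tsupport
    rw [Function.mem_support]
    intro h
    apply ht
    simp [haIdef, h, Real.zero_rpow (ne_of_gt hp0)]
  have hcIsupp : Function.support cI ⊆ Set.Ioc a b' := by
    intro t ht
    rw [Function.mem_support] at ht
    refine hsupp' ?_
    apply subset_tsupport
    rw [Function.mem_support]
    intro h
    apply ht
    simp [hcIdef, h, Real.zero_rpow (ne_of_gt hp1)]
  -- continuity and integrability of global integrands
  have hnum2 : Continuous (fun t : ℝ => |g t| ^ (p - 1) * |deriv g t|) :=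
    ((continuous_abs.comp hg.continuous).rpow_const (fun x => Or.inr hp1.le)).mul
      (continuous_abs.comp hg'cont)
  have hdenc : ∀ e : ℝ, 0 ≤ e → Continuous (fun t : ℝ => |t - d| ^ e) := fun e he =>
    (continuous_abs.comp (continuous_id.sub continuous_const)).rpow_const
      (fun x => Or.inr he)
  have hquot : ∀ (num : ℝ → ℝ) (e : ℝ), Continuous num → 0 ≤ e →
      (∀ t, t < d + δ → num t = 0) → Continuous (fun t => num t / |t - d| ^ e) := by
    intro num e hnc he hz
    rw [continuous_iff_continuousAt]
    intro t
    rcases eq_or_ne t d with heq | htd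
    · rw [heq]
      have hev : (fun s => num s / |s - d| ^ e) =ᶠ[nhds d] (fun _ => (0:ℝ)) := by
        filter_upwards [Iio_mem_nhds (show d < d + δ by linarith)] with s hs
        simp [hz s hs]
      exact ContinuousAt.congr continuousAt_const hev.symm
    · exact (hnc.continuousAt).div ((hdenc e he).continuousAt)
        (ne_of_gt (Real.rpow_pos_of_pos (abs_pos.2 (sub_ne_zero.2 htd)) e))
  have haCont : Continuous aI :=
    hquot _ p hucont hp0.le (fun t ht => by
      simp [hgz t ht, Real.zero_rpow (ne_of_gt hp0)])
  have hcCont : Continuous cI :=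
    hquot _ (p - 1) hnum2 hp1.le (fun t ht => by
      simp [hgz t ht, Real.zero_rpow (ne_of_gt hp1)])
  have hbCont : Continuous bI :=
    (continuous_abs.comp hg'cont).rpow_const (fun x => Or.inr hp0.le)
  have hsuppa : Function.support aI ⊆ tsupport g := by
    intro t ht
    rw [Function.mem_support] at ht
    apply subset_tsupport
    rw [Function.mem_support]
    intro h
    exact ht (by simp [haIdef, h, Real.zero_rpow (ne_of_gt hp0)])
  have hsuppb : Function.support bI ⊆ tsupport g := by
    intro t ht
    rw [Function.mem_support] at ht
    by_contra h
    exact ht (by simp [hbIdef, hg'0 t h, Real.zero_rpow (ne_of_gt hp0)])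
  have hsuppc : Function.support cI ⊆ tsupport g := by
    intro t ht
    rw [Function.mem_support] at ht
    apply subset_tsupport
    rw [Function.mem_support]
    intro h
    exact ht (by simp [hcIdef, h, Real.zero_rpow (ne_of_gt hp1)])
  have haInt : Integrable aI :=
    haCont.integrable_of_hasCompactSupport (hgc.mono' hsuppa)
  have hbInt : Integrable bI :=
    hbCont.integrable_of_hasCompactSupport (hgc.mono' hsuppb)
  have hcInt : Integrable cI :=
    hcCont.integrable_of_hasCompactSupport (hgc.mono' hsuppc)
  -- integration by parts on [a, b']
  have hwc : ∀ e : ℝ, ContinuousOn (fun t : ℝ => (t - d) ^ e) (Set.uIcc a b') := by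
    intro e t ht
    exact (((continuous_id.sub continuous_const).continuousAt).rpow_const
      (Or.inl (ne_of_gt (hpos t ht)))).continuousWithinAt
  have hderivF : ∀ t ∈ Set.uIcc a b', HasDerivAt (fun s => u s * (s - d) ^ (1 - p))
      (u' t * (t - d) ^ (1 - p) + (1 - p) * (u t * (t - d) ^ (-p))) t := by
    intro t ht
    have h1 : HasDerivAt (fun s : ℝ => s - d) 1 t := (hasDerivAt_id t).sub_const d
    have h2 : HasDerivAt (fun s : ℝ => (s - d) ^ (1 - p))
        ((1 - p) * (t - d) ^ (1 - p - 1) * 1) t :=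
      by have := (Real.hasDerivAt_rpow_const (p := 1 - p) (Or.inl (ne_of_gt (hpos t ht)))).comp t h1; exact this
    have h3 := (hu t).mul h2
    refine h3.congr_deriv ?_
    rw [show (1 : ℝ) - p - 1 = -p by ring]
    ring
  have hFint1 : IntervalIntegrable (fun t => u' t * (t - d) ^ (1 - p)) volume a b' :=
    ((hu'cont.continuousOn).mul (hwc (1 - p))).intervalIntegrable
  have hFint2 : IntervalIntegrable (fun t => u t * (t - d) ^ (-p)) volume a b' :=
    ((hucont.continuousOn).mul (hwc (-p))).intervalIntegrable
  have hua : u a = 0 := by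
    simp [hudef, hgz a hab, Real.zero_rpow (ne_of_gt hp0)]
  have hub' : u b' = 0 := by
    have hgb' : g b' = 0 := hg0 b' fun h => absurd (hsupp h).2 (not_le.2 hbb')
    simp [hudef, hgb', Real.zero_rpow (ne_of_gt hp0)]
  have hibp : ∫ t in a..b',
      (u' t * (t - d) ^ (1 - p) + (1 - p) * (u t * (t - d) ^ (-p))) = 0 := by
    rw [intervalIntegral.integral_eq_sub_of_hasDerivAt hderivF
      (hFint1.add (hFint2.const_mul (1 - p)))]
    rw [hua, hub']
    ring
  have hsplit : (∫ t in a..b', u' t * (t - d) ^ (1 - p)) =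
      (p - 1) * ∫ t in a..b', u t * (t - d) ^ (-p) := by
    have := intervalIntegral.integral_add hFint1 (hFint2.const_mul (1 - p))
    rw [this] at hibp
    rw [intervalIntegral.integral_const_mul] at hibp
    linarith
  -- identification with the global integrals
  have hIv : (∫ t in a..b', u t * (t - d) ^ (-p)) = ∫ t : ℝ, aI t := by
    have heq : Set.EqOn (fun t => u t * (t - d) ^ (-p)) aI (Set.uIcc a b') := by
      intro t ht
      have h1 : 0 < t - d := hpos t ht
      simp only [haIdef, hudef]
      rw [abs_of_pos h1, Real.rpow_neg h1.le, div_eq_mul_inv]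
    rw [intervalIntegral.integral_congr heq]
    exact intervalIntegral.integral_eq_integral_of_support_subset haIsupp
  -- bound the integrand of the IBP integral
  have hIbound : (∫ t in a..b', u' t * (t - d) ^ (1 - p)) ≤ p * ∫ t : ℝ, cI t := by
    have hle : ∀ t ∈ Set.Icc a b', u' t * (t - d) ^ (1 - p) ≤ p * cI t := by
      intro t ht
      have h1 : 0 < t - d := hpos t (by rwa [Set.uIcc_of_le hab'])
      have h2 : u' t * (t - d) ^ (1 - p) ≤ |u' t| * (t - d) ^ (1 - p) :=
        mul_le_mul_of_nonneg_right (le_abs_self _) (Real.rpow_nonneg h1.le _)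
      have h3 : |u' t| ≤ p * (|g t| ^ (p - 1) * |deriv g t|) := by
        simp only [hu'def]
        rw [abs_mul, abs_mul, abs_of_pos hp0, abs_signedPow hp]
        exact le_of_eq (by ring)
      have h4 : cI t = (|g t| ^ (p - 1) * |deriv g t|) * (t - d) ^ (1 - p) := by
        simp only [hcIdef]
        rw [abs_of_pos h1, show (1 : ℝ) - p = -(p - 1) by ring, Real.rpow_neg h1.le,
          div_eq_mul_inv]
      calc u' t * (t - d) ^ (1 - p) ≤ |u' t| * (t - d) ^ (1 - p) := h2
        _ ≤ p * (|g t| ^ (p - 1) * |deriv g t|) * (t - d) ^ (1 - p) :=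
            mul_le_mul_of_nonneg_right h3 (Real.rpow_nonneg h1.le _)
        _ = p * cI t := by rw [h4]; ring
    have hmono := intervalIntegral.integral_mono_on hab' hFint1
      ((hcInt.intervalIntegrable (a := a) (b := b')).const_mul p) hle
    refine le_trans hmono ?_
    rw [intervalIntegral.integral_const_mul]
    have : (∫ t in a..b', cI t) = ∫ t : ℝ, cI t :=
      intervalIntegral.integral_eq_integral_of_support_subset hcIsupp
    rw [this]
  have key : (p - 1) * (∫ t : ℝ, aI t) ≤ p * ∫ t : ℝ, cI t := by
    rw [← hIv, ← hsplit]
    exact hIbound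
  -- Young's inequality step
  set q : ℝ := p / (p - 1) with hqdef
  have hpq : p.HolderConjugate q := Real.HolderConjugate.conjExponent hp
  have hq0 : 0 < q := hpq.symm.pos
  set c : ℝ := (p - 1) / p with hcdef
  have hc0 : 0 < c := div_pos hp1 hp0
  set ε : ℝ := c ^ q⁻¹ with hεdef
  have hε0 : 0 < ε := Real.rpow_pos_of_pos hc0 _
  have hεq : ε ^ q = c := by
    rw [hεdef, ← Real.rpow_mul hc0.le, inv_mul_cancel₀ (ne_of_gt hq0), Real.rpow_one]
  have hεp : ε ^ p = c ^ (p - 1) := by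
    rw [hεdef, ← Real.rpow_mul hc0.le]
    congr 1
    rw [inv_mul_eq_div, hpq.div_conj_eq_sub_one]
  have hεppos : 0 < ε ^ p := Real.rpow_pos_of_pos hε0 p
  have hbnonneg : ∀ t : ℝ, 0 ≤ bI t := by
    intro t
    rw [hbIdef]
    exact Real.rpow_nonneg (abs_nonneg _) _
  have young : ∀ t : ℝ, cI t ≤ c / q * aI t + (ε ^ p)⁻¹ / p * bI t := by
    intro t
    rcases eq_or_ne t d with heq | htd
    · have hgt : g t = 0 := hgz t (by rw [heq]; linarith)
      have h1 : cI t = 0 := by simp [hcIdef, hgt, Real.zero_rpow (ne_of_gt hp1)]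
      have h2 : aI t = 0 := by simp [haIdef, hgt, Real.zero_rpow (ne_of_gt hp0)]
      rw [h1, h2]
      have hb := hbnonneg t
      have h3 : (0:ℝ) ≤ (ε ^ p)⁻¹ / p * bI t :=
        mul_nonneg (by positivity) hb
      rw [mul_zero, zero_add]
      exact h3
    · set X : ℝ := |g t| ^ (p - 1) / |t - d| ^ (p - 1) with hXdef
      have hX0 : 0 ≤ X := by
        rw [hXdef]
        positivity
      have hY0 : (0:ℝ) ≤ |deriv g t| := abs_nonneg _
      have hyoung := Real.young_inequality_of_nonneg (mul_nonneg hε0.le hX0)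
        (div_nonneg hY0 hε0.le) hpq.symm
      have hprod : (ε * X) * (|deriv g t| / ε) = cI t := by
        calc (ε * X) * (|deriv g t| / ε) = X * |deriv g t| * (ε * ε⁻¹) := by ring
          _ = X * |deriv g t| := by rw [mul_inv_cancel₀ (ne_of_gt hε0), mul_one]
          _ = cI t := by rw [hcIdef, hXdef]; ring
      have hXq : X ^ q = aI t := by
        rw [hXdef, haIdef,
          Real.div_rpow (Real.rpow_nonneg (abs_nonneg _) _)
            (Real.rpow_nonneg (abs_nonneg _) _),
          ← Real.rpow_mul (abs_nonneg _), ← Real.rpow_mul (abs_nonneg _),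
          hpq.sub_one_mul_conj]
      have h1 : (ε * X) ^ q = c * aI t := by
        rw [Real.mul_rpow hε0.le hX0, hεq, hXq]
      have h2 : (|deriv g t| / ε) ^ p = (ε ^ p)⁻¹ * bI t := by
        rw [Real.div_rpow hY0 hε0.le, hbIdef, div_eq_mul_inv, mul_comm]
      rw [hprod, h1, h2] at hyoung
      calc cI t ≤ c * aI t / q + (ε ^ p)⁻¹ * bI t / p := hyoung
        _ = c / q * aI t + (ε ^ p)⁻¹ / p * bI t := by ring
  have hCle : (∫ t : ℝ, cI t) ≤
      c / q * (∫ t : ℝ, aI t) + (ε ^ p)⁻¹ / p * (∫ t : ℝ, bI t) := by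
    have h := integral_mono hcInt
      ((haInt.const_mul (c / q)).add (hbInt.const_mul ((ε ^ p)⁻¹ / p))) young
    simp only [Pi.add_apply] at h
    rwa [integral_add (haInt.const_mul _) (hbInt.const_mul _), integral_const_mul,
      integral_const_mul] at h
  -- final arithmetic
  have hpc : p * c = p - 1 := by
    rw [hcdef]
    field_simp
  have hqinv : q⁻¹ = c := by
    rw [hqdef, hcdef]
    exact inv_div p (p - 1)
  have h2 : p * (c / q * (∫ t : ℝ, aI t) + (ε ^ p)⁻¹ / p * (∫ t : ℝ, bI t)) =
      (p - 1) * c * (∫ t : ℝ, aI t) + (ε ^ p)⁻¹ * (∫ t : ℝ, bI t) := by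
    have h6 : c / q = c * c := by rw [div_eq_mul_inv, hqinv]
    rw [h6]
    have h7 : p * (c * c * (∫ t : ℝ, aI t) + (ε ^ p)⁻¹ / p * (∫ t : ℝ, bI t)) =
        (p * c) * (c * (∫ t : ℝ, aI t)) + (p / p) * ((ε ^ p)⁻¹ * (∫ t : ℝ, bI t)) := by
      ring
    rw [h7, hpc, div_self (ne_of_gt hp0), one_mul, mul_assoc]
  have h3 : (p - 1) * (∫ t : ℝ, aI t) ≤
      (p - 1) * c * (∫ t : ℝ, aI t) + (ε ^ p)⁻¹ * (∫ t : ℝ, bI t) := by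
    calc (p - 1) * (∫ t : ℝ, aI t) ≤ p * ∫ t : ℝ, cI t := key
      _ ≤ p * (c / q * (∫ t : ℝ, aI t) + (ε ^ p)⁻¹ / p * (∫ t : ℝ, bI t)) :=
          mul_le_mul_of_nonneg_left hCle hp0.le
      _ = (p - 1) * c * (∫ t : ℝ, aI t) + (ε ^ p)⁻¹ * (∫ t : ℝ, bI t) := h2
  have hid : (p - 1) - (p - 1) * c = c := by
    linear_combination -hpc
  have hfin : c * (∫ t : ℝ, aI t) ≤ (ε ^ p)⁻¹ * ∫ t : ℝ, bI t := by
    have h4 : c * (∫ t : ℝ, aI t) = ((p - 1) - (p - 1) * c) * (∫ t : ℝ, aI t) := by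
      rw [hid]
    have h8 : ((p - 1) - (p - 1) * c) * (∫ t : ℝ, aI t) =
        (p - 1) * (∫ t : ℝ, aI t) - (p - 1) * c * (∫ t : ℝ, aI t) := by ring
    rw [h4, h8]
    linarith [h3]
  have hcp : c ^ p = ε ^ p * c := by
    have h5 := Real.rpow_add_one (ne_of_gt hc0) (p - 1)
    rw [sub_add_cancel] at h5
    rw [h5, hεp]
  calc c ^ p * (∫ t : ℝ, aI t) = ε ^ p * (c * ∫ t : ℝ, aI t) := by rw [hcp]; ring
    _ ≤ ε ^ p * ((ε ^ p)⁻¹ * ∫ t : ℝ, bI t) :=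
        mul_le_mul_of_nonneg_left hfin hεppos.le
    _ = ∫ t : ℝ, bI t := by
        rw [← mul_assoc, mul_inv_cancel₀ (ne_of_gt hεppos), one_mul]

end HardyAux

set_option maxHeartbeats 1000000 in
/-- the sharp Hardy inequality on the half-space `{x₁ > d}` of
the Grushin plane. -/
theorem stmt_7 (d : ℝ) (p : ℝ) (hp : 1 < p)
    (f : (Fin 2 → ℝ) → ℝ)
    (hf : ContDiff ℝ (⊤ : ℕ∞) f) (hfc : HasCompactSupport f)
    (hfs : tsupport f ⊆ {x : Fin 2 → ℝ | x 0 > d}) :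
    ∫ x in {x : Fin 2 → ℝ | x 0 > d},
        ((X1G f x) ^ 2 + (X2G f x) ^ 2) ^ (p / 2) ≥
      ((p - 1) / p) ^ p *
        ∫ x in {x : Fin 2 → ℝ | x 0 > d}, |f x| ^ p / |x 0 - d| ^ p := by
  have hp0 : (0:ℝ) < p := by linarith
  -- uniform gap δ
  obtain ⟨δ, hδ, hδs⟩ : ∃ δ > 0, tsupport f ⊆ {x : Fin 2 → ℝ | d + δ ≤ x 0} := by
    rcases (tsupport f).eq_empty_or_nonempty with he | hne
    · exact ⟨1, one_pos, by rw [he]; exact Set.empty_subset _⟩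
    · obtain ⟨x₀, hx₀mem, hx₀min⟩ :=
        hfc.exists_isMinOn hne ((continuous_apply 0).continuousOn)
      refine ⟨x₀ 0 - d, sub_pos.2 (hfs hx₀mem), fun x hx => ?_⟩
      have h1 : x₀ 0 ≤ x 0 := hx₀min hx
      simp only [Set.mem_setOf_eq]
      linarith
  have hfd : Differentiable ℝ f := hf.differentiable (by simp)
  have hfdc : Continuous (fderiv ℝ f) := hf.continuous_fderiv (by simp)
  have hX1c : Continuous (X1G f) := hfdc.clm_apply continuous_const
  have hX2c : Continuous (X2G f) := by
    have hv : Continuous (fun x : Fin 2 → ℝ => (![0, x 0] : Fin 2 → ℝ)) := by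
      refine continuous_pi fun i => ?_
      fin_cases i
      · simpa using continuous_const
      · simpa using continuous_apply 0
    exact hfdc.clm_apply hv
  -- zero of fderiv outside tsupport
  have hfder0 : ∀ x ∉ tsupport f, fderiv ℝ f x = 0 := by
    intro x hx
    by_contra h
    exact hx (support_fderiv_subset ℝ (Function.mem_support.2 h))
  have hf0 : ∀ x ∉ tsupport f, f x = 0 := fun x hx => image_eq_zero_of_notMem_tsupport hx
  set LHSf : (Fin 2 → ℝ) → ℝ :=
    fun x => ((X1G f x) ^ 2 + (X2G f x) ^ 2) ^ (p / 2) with hLdef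
  set MIDf : (Fin 2 → ℝ) → ℝ := fun x => |X1G f x| ^ p with hMdef
  set RHSf : (Fin 2 → ℝ) → ℝ := fun x => |f x| ^ p / |x 0 - d| ^ p with hRdef
  -- supports
  have hLsupp : Function.support LHSf ⊆ tsupport f := by
    intro x hx
    rw [Function.mem_support] at hx
    by_contra h
    apply hx
    have h0 := hfder0 x h
    simp [hLdef, X1G, X2G, h0, Real.zero_rpow (by positivity : p / 2 ≠ 0)]
  have hMsupp : Function.support MIDf ⊆ tsupport f := by
    intro x hx
    rw [Function.mem_support] at hx
    by_contra h
    apply hx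
    have h0 := hfder0 x h
    simp [hMdef, X1G, h0, Real.zero_rpow (ne_of_gt hp0)]
  have hRsupp : Function.support RHSf ⊆ tsupport f := by
    intro x hx
    rw [Function.mem_support] at hx
    by_contra h
    apply hx
    simp [hRdef, hf0 x h, Real.zero_rpow (ne_of_gt hp0)]
  -- continuity
  have hLc : Continuous LHSf :=
    (((hX1c.pow 2).add (hX2c.pow 2))).rpow_const (fun x => Or.inr (by positivity))
  have hMc : Continuous MIDf :=
    (hX1c.abs).rpow_const (fun x => Or.inr hp0.le)
  have hRc : Continuous RHSf := by
    rw [continuous_iff_continuousAt]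
    intro x
    rcases eq_or_ne (x 0) d with heq | hne
    · have hx : x ∉ tsupport f := fun hmem => by
        have := hδs hmem
        rw [Set.mem_setOf_eq] at this
        linarith
      have hev : RHSf =ᶠ[nhds x] (fun _ => (0:ℝ)) := by
        filter_upwards [(isClosed_tsupport f).isOpen_compl.mem_nhds hx] with z hz
        simp [hRdef, hf0 z hz, Real.zero_rpow (ne_of_gt hp0)]
      exact ContinuousAt.congr continuousAt_const hev.symm
    · refine ContinuousAt.div ?_ ?_ ?_
      · exact ((continuous_abs.comp hf.continuous).rpow_const
          (fun z => Or.inr hp0.le)).continuousAt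
      · exact ((continuous_abs.comp ((continuous_apply 0).sub continuous_const)).rpow_const
          (fun z => Or.inr hp0.le)).continuousAt
      · exact ne_of_gt (Real.rpow_pos_of_pos (abs_pos.2 (sub_ne_zero.2 hne)) p)
  -- integrability
  have hLint : Integrable LHSf :=
    hLc.integrable_of_hasCompactSupport (hfc.mono' hLsupp)
  have hMint : Integrable MIDf :=
    hMc.integrable_of_hasCompactSupport (hfc.mono' hMsupp)
  have hRint : Integrable RHSf :=
    hRc.integrable_of_hasCompactSupport (hfc.mono' hRsupp)
  -- set integrals are full integrals
  have hsubS : tsupport f ⊆ {x : Fin 2 → ℝ | x 0 > d} := hfs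
  have hLset : (∫ x in {x : Fin 2 → ℝ | x 0 > d}, LHSf x) = ∫ x, LHSf x := by
    refine setIntegral_eq_integral_of_forall_compl_eq_zero fun x hx => ?_
    by_contra h
    exact hx (hsubS (hLsupp (Function.mem_support.2 h)))
  have hRset : (∫ x in {x : Fin 2 → ℝ | x 0 > d}, RHSf x) = ∫ x, RHSf x := by
    refine setIntegral_eq_integral_of_forall_compl_eq_zero fun x hx => ?_
    by_contra h
    exact hx (hsubS (hRsupp (Function.mem_support.2 h)))
  -- pointwise bound MIDf ≤ LHSf
  have hML : ∀ x, MIDf x ≤ LHSf x := by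
    intro x
    have h1 : MIDf x = ((X1G f x) ^ 2) ^ (p / 2) := by
      rw [hMdef, ← sq_abs, ← Real.rpow_natCast |X1G f x| 2,
        ← Real.rpow_mul (abs_nonneg _)]
      norm_num
      congr 1
      ring
    rw [h1, hLdef]
    exact Real.rpow_le_rpow (sq_nonneg _)
      (le_add_of_nonneg_right (sq_nonneg _)) (by positivity)
  have hMLint : (∫ x, MIDf x) ≤ ∫ x, LHSf x := integral_mono hMint hLint hML
  -- product space transport
  set e : (Fin 2 → ℝ) ≃ᵐ ℝ × ℝ := MeasurableEquiv.piFinTwo (fun _ : Fin 2 => ℝ) with hedef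
  have he : MeasurePreserving e volume volume := volume_preserving_piFinTwo _
  have hesymm : ∀ z : ℝ × ℝ, e.symm z = ![z.1, z.2] := by
    intro z
    funext i
    fin_cases i <;> rfl
  have hcompI : ∀ G : (Fin 2 → ℝ) → ℝ, Integrable G volume →
      Integrable (fun z : ℝ × ℝ => G ![z.1, z.2]) ((volume : Measure ℝ).prod volume) := by
    intro G hG
    have h1 : Integrable (G ∘ e.symm) volume :=
      ((MeasurePreserving.symm e he).integrable_comp_emb e.symm.measurableEmbedding).2 hG
    have h2 : (fun z : ℝ × ℝ => G ![z.1, z.2]) = G ∘ e.symm := by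
      funext z
      simp [Function.comp, hesymm z]
    rw [h2, ← Measure.volume_eq_prod]
    exact h1
  have hcompE : ∀ G : (Fin 2 → ℝ) → ℝ,
      (∫ z : ℝ × ℝ, G ![z.1, z.2] ∂((volume : Measure ℝ).prod volume)) = ∫ x, G x := by
    intro G
    have h1 : (∫ z : ℝ × ℝ, G (e.symm z)) = ∫ x, G x :=
      (MeasurePreserving.symm e he).integral_comp e.symm.measurableEmbedding G
    rw [← Measure.volume_eq_prod]
    rw [← h1]
    congr 1
  -- slices
  have hcurve : ∀ y : ℝ, (fun s : ℝ => (![s, y] : Fin 2 → ℝ)) =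
      fun s => s • (![1, 0] : Fin 2 → ℝ) + ![0, y] := by
    intro y
    funext s
    funext i
    fin_cases i <;> simp
  have hslice : ∀ y : ℝ,
      ((p - 1) / p) ^ p * (∫ t : ℝ, RHSf ![t, y]) ≤ ∫ t : ℝ, MIDf ![t, y] := by
    intro y
    have hι : ∀ t : ℝ, HasDerivAt (fun s : ℝ => (![s, y] : Fin 2 → ℝ)) ![1, 0] t := by
      intro t
      rw [hcurve y]
      simpa using ((hasDerivAt_id t).smul_const (![1, 0] : Fin 2 → ℝ)).add_const
        (![0, y] : Fin 2 → ℝ)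
    have hιc : ContDiff ℝ (⊤ : ℕ∞) (fun s : ℝ => (![s, y] : Fin 2 → ℝ)) := by
      rw [hcurve y]
      exact (contDiff_id.smul contDiff_const).add contDiff_const
    set gy : ℝ → ℝ := fun t => f ![t, y] with hgydef
    have hgyc : ContDiff ℝ (⊤ : ℕ∞) gy := hf.comp hιc
    have hder : ∀ t, HasDerivAt gy (X1G f ![t, y]) t := fun t =>
      ((hfd _).hasFDerivAt).comp_hasDerivAt t (hι t)
    have hderiv_eq : ∀ t, deriv gy t = X1G f ![t, y] := fun t => (hder t).deriv
    obtain ⟨R, hR⟩ := hfc.isBounded.subset_closedBall 0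
    have hgy0 : ∀ t : ℝ, t ∉ Set.Icc (-R) R → gy t = 0 := by
      intro t ht
      apply hf0
      intro hmem
      apply ht
      have h1 := hR hmem
      rw [Metric.mem_closedBall, dist_zero_right] at h1
      have h2 : ‖(![t, y] : Fin 2 → ℝ) 0‖ ≤ ‖(![t, y] : Fin 2 → ℝ)‖ :=
        norm_le_pi_norm _ 0
      simp only [Matrix.cons_val_zero, Real.norm_eq_abs] at h2
      have h3 : |t| ≤ R := le_trans h2 h1
      exact ⟨neg_le_of_abs_le h3, le_of_abs_le h3⟩
    have hgycomp : HasCompactSupport gy := HasCompactSupport.intro isCompact_Icc hgy0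
    have hgys : tsupport gy ⊆ Set.Ici (d + δ) := by
      apply closure_minimal _ isClosed_Ici
      intro t ht
      have hmem : (![t, y] : Fin 2 → ℝ) ∈ tsupport f :=
        subset_tsupport f (Function.mem_support.2 ht)
      have := hδs hmem
      simpa using this
    have hH := hardy1D hp hδ hgyc hgycomp hgys
    have hMeq : (fun t : ℝ => MIDf ![t, y]) = fun t => |deriv gy t| ^ p := by
      funext t
      rw [hMdef]
      simp only
      rw [hderiv_eq t]
    have hReq : (fun t : ℝ => RHSf ![t, y]) = fun t => |gy t| ^ p / |t - d| ^ p := by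
      funext t
      rw [hRdef, hgydef]
      simp
    calc ((p - 1) / p) ^ p * ∫ t : ℝ, RHSf ![t, y]
        = ((p - 1) / p) ^ p * ∫ t : ℝ, |gy t| ^ p / |t - d| ^ p := by rw [hReq]
      _ ≤ ∫ t : ℝ, |deriv gy t| ^ p := hH
      _ = ∫ t : ℝ, MIDf ![t, y] := by rw [hMeq]
  -- Fubini assembly
  have hMprod : Integrable (fun z : ℝ × ℝ => MIDf ![z.1, z.2])
      ((volume : Measure ℝ).prod volume) := hcompI _ hMint
  have hRprod : Integrable (fun z : ℝ × ℝ => RHSf ![z.1, z.2])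
      ((volume : Measure ℝ).prod volume) := hcompI _ hRint
  have hMiter : (∫ x, MIDf x) = ∫ y : ℝ, ∫ t : ℝ, MIDf ![t, y] := by
    rw [← hcompE MIDf, integral_prod_symm _ hMprod]
  have hRiter : (∫ x, RHSf x) = ∫ y : ℝ, ∫ t : ℝ, RHSf ![t, y] := by
    rw [← hcompE RHSf, integral_prod_symm _ hRprod]
  have hMy : Integrable (fun y : ℝ => ∫ t : ℝ, MIDf ![t, y]) := by
    simpa using hMprod.integral_prod_right
  have hRy : Integrable (fun y : ℝ => ∫ t : ℝ, RHSf ![t, y]) := by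
    simpa using hRprod.integral_prod_right
  have hYmono : ((p - 1) / p) ^ p * (∫ x, RHSf x) ≤ ∫ x, MIDf x := by
    rw [hMiter, hRiter, ← integral_const_mul]
    exact integral_mono (hRy.const_mul _) hMy (fun y => hslice y)
  rw [ge_iff_le, hLset, hRset]
  calc ((p - 1) / p) ^ p * ∫ x, RHSf x ≤ ∫ x, MIDf x := hYmono
    _ ≤ ∫ x, LHSf x := hMLint
end
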